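/- arXiv:1603.06944 — 7 statements merged into one kernel-verified Lean document; each statement's English description precedes it below -/
import Mathlib

section
/- Let X be a topological space and n ≥ 1. Every unitary evolution U on X with values in n×n complex unitary matrices that is gapped at 0 and π is homotopic, through unitary evolutions gapped at 0 and π, to a composition L*C, where L is a unitary loop and C is a constant evolution generated by a continuous Hermitian family H : X → Matrix n n ℂ all of whose eigenvalues lie in (-π,π)\{0} (i.e. C is gapped at zero). -/
open Matrix Set

/-- A unitary evolution on `X`: a continuous map `U : X × [0,1] → Matrix n n ℂ` with every
`U (x,t)` unitary and `U (x,0) = 1`. -/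
def IsUnitaryEvolution {X : Type*} [TopologicalSpace X] {n : ℕ}
    (U : X × unitInterval → Matrix (Fin n) (Fin n) ℂ) : Prop :=
  Continuous U ∧ (∀ p, U p ∈ Matrix.unitaryGroup (Fin n) ℂ) ∧ ∀ x, U (x, 0) = 1

/-- A unitary evolution gapped at 0 and π: neither 1 nor -1 is an eigenvalue of `U (x,1)`. -/
def IsGappedEvolution {X : Type*} [TopologicalSpace X] {n : ℕ}
    (U : X × unitInterval → Matrix (Fin n) (Fin n) ℂ) : Prop :=
  IsUnitaryEvolution U ∧
    ∀ x, (1 : ℂ) ∉ spectrum ℂ (U (x, 1)) ∧ (-1 : ℂ) ∉ spectrum ℂ (U (x, 1))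

/-- A unitary loop: a unitary evolution with `U (x,1) = 1` for all `x`. -/
def IsUnitaryLoop {X : Type*} [TopologicalSpace X] {n : ℕ}
    (U : X × unitInterval → Matrix (Fin n) (Fin n) ℂ) : Prop :=
  IsUnitaryEvolution U ∧ ∀ x, U (x, 1) = 1

/-- A continuous family of Hermitian matrices, all of whose eigenvalues are real and lie in
`(-π, π) \ {0}`. -/
def IsGappedHermitianFamily {X : Type*} [TopologicalSpace X] {n : ℕ}
    (H : X → Matrix (Fin n) (Fin n) ℂ) : Prop :=
  Continuous H ∧ ∀ x, (H x).IsHermitian ∧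
    ∀ z ∈ spectrum ℂ (H x), ∃ r : ℝ,
      z = (r : ℂ) ∧ r ∈ Set.Ioo (-Real.pi) Real.pi ∧ r ≠ 0

/-- The constant evolution generated by a static Hamiltonian family:
`C (x,t) = exp (-i t H x)`. -/
noncomputable def constEvol {X : Type*} [TopologicalSpace X] {n : ℕ}
    (H : X → Matrix (Fin n) (Fin n) ℂ) : X × unitInterval → Matrix (Fin n) (Fin n) ℂ :=
  fun p => NormedSpace.exp ((-(((p.2 : ℝ) : ℂ) * Complex.I)) • H p.1)

/-- A gapped constant evolution. -/
def IsGappedConstantEvolution {X : Type*} [TopologicalSpace X] {n : ℕ}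
    (U : X × unitInterval → Matrix (Fin n) (Fin n) ℂ) : Prop :=
  ∃ H : X → Matrix (Fin n) (Fin n) ℂ, IsGappedHermitianFamily H ∧ U = constEvol H

/-- Composition of unitary evolutions: run `U₁` at double speed on `[0,1/2]`, then `U₂`
(multiplied by the endpoint of `U₁`) on `[1/2,1]`. -/
noncomputable def compEvol {X : Type*} [TopologicalSpace X] {n : ℕ}
    (U₁ U₂ : X × unitInterval → Matrix (Fin n) (Fin n) ℂ) :
    X × unitInterval → Matrix (Fin n) (Fin n) ℂ :=
  fun p =>
    if (p.2 : ℝ) ≤ 1 / 2 then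
      U₁ (p.1, Set.projIcc 0 1 zero_le_one (2 * (p.2 : ℝ)))
    else
      U₂ (p.1, Set.projIcc 0 1 zero_le_one (2 * (p.2 : ℝ) - 1)) * U₁ (p.1, 1)

/-- Homotopy through maps satisfying the property `Q`. -/
def HomotopicThrough {Y α : Type*} [TopologicalSpace Y] [TopologicalSpace α]
    (Q : (Y → α) → Prop) (f g : Y → α) : Prop :=
  ∃ h : unitInterval × Y → α, Continuous h ∧ (∀ s, Q fun y => h (s, y)) ∧
    (∀ y, h (0, y) = f y) ∧ (∀ y, h (1, y) = g y)

open Matrix Set Complex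
namespace GappedAux



variable {n : ℕ}

/-- Cayley transform of a unitary matrix with `-1` not in the spectrum. -/
noncomputable def cay (A : Matrix (Fin n) (Fin n) ℂ) : Matrix (Fin n) (Fin n) ℂ :=
  (-Complex.I) • ((A - 1) * (A + 1)⁻¹)

/-- The (scaled) matrix logarithm, defined by an integral formula. -/
noncomputable def Hmat (A : Matrix (Fin n) (Fin n) ℂ) : Matrix (Fin n) (Fin n) ℂ :=
  Matrix.of fun i j : Fin n => (-2 : ℂ) *
    ∫ t in (0:ℝ)..1, ((cay A * (1 + ((t : ℂ) • cay A) ^ 2)⁻¹ : Matrix (Fin n) (Fin n) ℂ)) i j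

lemma isUnit_add_one {A : Matrix (Fin n) (Fin n) ℂ} (h2 : (-1 : ℂ) ∉ spectrum ℂ A) :
    IsUnit (A + 1) := by
  have h0 : IsUnit (-(A + 1)) := by
    have := spectrum.notMem_iff.mp h2
    have h : (algebraMap ℂ (Matrix (Fin n) (Fin n) ℂ)) (-1) - A = -(A + 1) := by
      simp [Algebra.algebraMap_eq_smul_one, sub_eq_add_neg]
    rwa [h] at this
  simpa using h0.neg

lemma isUnit_sub_one {A : Matrix (Fin n) (Fin n) ℂ} (h1 : (1 : ℂ) ∉ spectrum ℂ A) :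
    IsUnit (A - 1) := by
  have h0 : IsUnit (-(A - 1)) := by
    have := spectrum.notMem_iff.mp h1
    have h : (algebraMap ℂ (Matrix (Fin n) (Fin n) ℂ)) (1) - A = -(A - 1) := by
      simp [Algebra.algebraMap_eq_smul_one, sub_eq_add_neg]
    rwa [h] at this
  simpa using h0.neg

lemma cay_isHermitian {A : Matrix (Fin n) (Fin n) ℂ} (hA : A ∈ Matrix.unitaryGroup (Fin n) ℂ)
    (h2 : (-1 : ℂ) ∉ spectrum ℂ A) : (cay A).IsHermitian := by
  have hu : IsUnit (A + 1) := isUnit_add_one h2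
  have hud : IsUnit (A + 1).det := (Matrix.isUnit_iff_isUnit_det _).mp hu
  set B := (A + 1)⁻¹ with hB
  have hB1 : (A + 1) * B = 1 := Matrix.mul_nonsing_inv _ hud
  have hB2 : B * (A + 1) = 1 := Matrix.nonsing_inv_mul _ hud
  have hstar : Aᴴ * A = 1 := hA.1
  have hstar' : A * Aᴴ = 1 := hA.2
  have hudH : IsUnit (Aᴴ + 1).det := by
    have : (Aᴴ + 1) = (A + 1)ᴴ := by simp
    rw [this, Matrix.det_conjTranspose, isUnit_iff_ne_zero]
    simpa using hud.ne_zero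
  -- core computation
  have hcore : (Aᴴ + 1) * (-((A - 1) * B)) = Aᴴ - 1 := by
    have expand : (Aᴴ + 1) * (-((A - 1) * B)) = -((Aᴴ * A + A - Aᴴ - 1) * B) := by
      noncomm_ring
    rw [expand, hstar]
    have : (1 : Matrix (Fin n) (Fin n) ℂ) + A - Aᴴ - 1 = A - Aᴴ := by abel
    rw [this]
    have factored : (A - Aᴴ) = -((Aᴴ - 1) * (A + 1)) := by
      have : (Aᴴ - 1) * (A + 1) = Aᴴ * A + Aᴴ - A - 1 := by noncomm_ring
      rw [this, hstar]; abel
    rw [factored, neg_mul, neg_neg, mul_assoc, hB1, mul_one]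
  have hBH : Bᴴ = (Aᴴ + 1)⁻¹ := by
    rw [hB, Matrix.conjTranspose_nonsing_inv]
    congr 1; simp
  show (cay A)ᴴ = cay A
  rw [cay, Matrix.conjTranspose_smul, Matrix.conjTranspose_mul, hBH]
  have h1H : (A - 1)ᴴ = Aᴴ - 1 := by simp
  rw [h1H]
  have key : (Aᴴ + 1)⁻¹ * (Aᴴ - 1) = -((A - 1) * B) := by
    rw [← hcore, ← mul_assoc, Matrix.nonsing_inv_mul _ hudH, one_mul]
  rw [key]
  simp [smul_neg, ← neg_smul] <;> rfl


lemma scalar_exp (d : ℝ) :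
    Complex.exp (2 * (Real.arctan d : ℝ) * Complex.I) * (1 - Complex.I * d) = 1 + Complex.I * d := by
  set φ := Real.arctan d with hφ
  have hsc : (Real.sin φ : ℝ) = d * Real.cos φ := by
    have hc : Real.cos φ ≠ 0 := (Real.cos_arctan_pos d).ne'
    have ht : Real.tan φ = d := Real.tan_arctan d
    rw [Real.tan_eq_sin_div_cos] at ht
    field_simp at ht
    linarith [ht]
  have hc2 : (Real.cos φ : ℝ) ^ 2 * (1 + d ^ 2) = 1 := by
    have := Real.cos_sq_arctan d
    rw [← hφ] at this
    rw [this]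
    field_simp
  have hexp : Complex.exp (2 * (φ : ℝ) * Complex.I) = (Complex.exp ((φ:ℝ) * Complex.I)) ^ 2 := by
    rw [← Complex.exp_nat_mul]
    ring_nf
  rw [hexp, Complex.exp_mul_I]
  rw [← Complex.ofReal_cos, ← Complex.ofReal_sin]
  have hs' : ((Real.sin φ : ℝ) : ℂ) = (d : ℂ) * ((Real.cos φ : ℝ) : ℂ) := by
    rw [hsc]; push_cast; ring
  rw [hs']
  have hc2' : ((Real.cos φ : ℝ) : ℂ) ^ 2 * (1 + (d:ℂ) ^ 2) = 1 := by
    have := congrArg (Complex.ofReal) hc2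
    push_cast at this
    convert this using 2 <;> push_cast <;> ring
  set c : ℂ := ((Real.cos φ : ℝ) : ℂ)
  linear_combination (1 + Complex.I * (d:ℂ)) * hc2' +
    (-(d:ℂ)^2 * c^2 * (1 + Complex.I * (d:ℂ))) * Complex.I_sq

lemma scalar_integral (d : ℝ) :
    (∫ t in (0:ℝ)..1, d / (1 + t ^ 2 * d ^ 2)) = Real.arctan d := by
  rcases eq_or_ne d 0 with rfl | hd
  · simp
  · have h1 : ∀ t : ℝ, d / (1 + t ^ 2 * d ^ 2) = d * (1 / (1 + (d * t) ^ 2)) := by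
      intro t
      have : (d * t) ^ 2 = t ^ 2 * d ^ 2 := by ring
      rw [this]; ring
    rw [intervalIntegral.integral_congr (fun t _ => h1 t)]
    rw [intervalIntegral.integral_const_mul]
    rw [intervalIntegral.integral_comp_mul_left (fun u => 1 / (1 + u ^ 2)) hd]
    simp [integral_one_div_one_add_sq]
    field_simp

variable {n : ℕ}

section Conjd

variable {V : Matrix (Fin n) (Fin n) ℂ}

lemma conjd_mul (hV2 : star V * V = 1) (m m' : Fin n → ℂ) :
    (V * diagonal m * star V) * (V * diagonal m' * star V)
      = V * diagonal (fun k => m k * m' k) * star V := by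
  have h : (V * diagonal m * star V) * (V * diagonal m' * star V)
      = V * (diagonal m * (star V * V) * diagonal m') * star V := by
    simp only [mul_assoc]
  rw [h, hV2, mul_one, diagonal_mul_diagonal]

lemma conjd_add (m m' : Fin n → ℂ) :
    (V * diagonal m * star V) + (V * diagonal m' * star V)
      = V * diagonal (fun k => m k + m' k) * star V := by
  rw [← diagonal_add, mul_add, add_mul]

lemma conjd_sub (m m' : Fin n → ℂ) :
    (V * diagonal m * star V) - (V * diagonal m' * star V)
      = V * diagonal (fun k => m k - m' k) * star V := by
  rw [← diagonal_sub, mul_sub, sub_mul]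

lemma conjd_smul (c : ℂ) (m : Fin n → ℂ) :
    c • (V * diagonal m * star V) = V * diagonal (fun k => c * m k) * star V := by
  rw [show (fun k => c * m k) = c • m from rfl, diagonal_smul, ← smul_mul_assoc, ← mul_smul_comm]

lemma conjd_one (hV1 : V * star V = 1) :
    (1 : Matrix (Fin n) (Fin n) ℂ) = V * Matrix.diagonal (fun _ => 1) * star V := by
  rw [diagonal_one, mul_one, hV1]

lemma conjd_inv (hV1 : V * star V = 1) (hV2 : star V * V = 1) (m : Fin n → ℂ)
    (hm : ∀ k, m k ≠ 0) :
    (V * diagonal m * star V)⁻¹ = V * diagonal (fun k => (m k)⁻¹) * star V := by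
  apply Matrix.inv_eq_right_inv
  rw [conjd_mul hV2]
  have h : (fun k => m k * (m k)⁻¹) = fun _ => (1:ℂ) := funext fun k => mul_inv_cancel₀ (hm k)
  rw [h, ← conjd_one hV1]

lemma conjd_entry (m : Fin n → ℂ) (i j : Fin n) :
    (V * diagonal m * star V) i j = ∑ k, V i k * star (V j k) * m k := by
  rw [show (V * diagonal m * star V) i j
      = ∑ k, (V * diagonal m) i k * (star V) k j from Matrix.mul_apply]
  simp only [Matrix.mul_diagonal, Matrix.star_apply]
  exact Finset.sum_congr rfl fun k _ => by ring

lemma conjd_star (m : Fin n → ℂ) :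
    star (V * diagonal m * star V) = V * diagonal (fun k => star (m k)) * star V := by
  simp only [Matrix.star_eq_conjTranspose, conjTranspose_mul, conjTranspose_conjTranspose,
    diagonal_conjTranspose]
  rw [← mul_assoc]
  rfl

lemma conjd_spectrum (hV1 : V * star V = 1) (hV2 : star V * V = 1) (m : Fin n → ℂ) :
    spectrum ℂ (V * diagonal m * star V) = Set.range m := by
  let u : (Matrix (Fin n) (Fin n) ℂ)ˣ := ⟨V, star V, hV1, hV2⟩
  have h : V * diagonal m * star V
      = (u : Matrix (Fin n) (Fin n) ℂ) * diagonal m * ((u⁻¹ : (Matrix (Fin n) (Fin n) ℂ)ˣ)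
        : Matrix (Fin n) (Fin n) ℂ) := rfl
  rw [h, spectrum.units_conjugate, spectrum_diagonal]

lemma conjd_exp (hV1 : V * star V = 1) (hV2 : star V * V = 1) (m : Fin n → ℂ) :
    NormedSpace.exp (V * diagonal m * star V)
      = V * diagonal (fun k => Complex.exp (m k)) * star V := by
  let u : (Matrix (Fin n) (Fin n) ℂ)ˣ := ⟨V, star V, hV1, hV2⟩
  have h : V * diagonal m * star V
      = (u : Matrix (Fin n) (Fin n) ℂ) * diagonal m * ((u⁻¹ : (Matrix (Fin n) (Fin n) ℂ)ˣ)
        : Matrix (Fin n) (Fin n) ℂ) := rfl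
  rw [h, Matrix.exp_units_conj u, Matrix.exp_diagonal, Pi.exp_def]
  have h2 : (fun i => NormedSpace.exp (m i)) = fun k => Complex.exp (m k) := by
    funext k; rw [Complex.exp_eq_exp_ℂ]
  rw [h2]; rfl

end Conjd

lemma one_sub_I_mul_ne (r : ℝ) : (1 : ℂ) - Complex.I * r ≠ 0 := by
  intro h
  have := congrArg Complex.re h
  simp at this

lemma scalar_exp' (r : ℝ) :
    ((1:ℂ) + Complex.I * r) * ((1:ℂ) - Complex.I * r)⁻¹
      = Complex.exp (2 * (Real.arctan r : ℝ) * Complex.I) := by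
  rw [← scalar_exp r, mul_assoc, mul_inv_cancel₀ (one_sub_I_mul_ne r), mul_one]

/-- The key diagonalization package. -/
lemma key {A : Matrix (Fin n) (Fin n) ℂ} (hA : A ∈ Matrix.unitaryGroup (Fin n) ℂ)
    (h1 : (1 : ℂ) ∉ spectrum ℂ A) (h2 : (-1 : ℂ) ∉ spectrum ℂ A) :
    ∃ (V : Matrix (Fin n) (Fin n) ℂ) (d : Fin n → ℝ),
      V * star V = 1 ∧ star V * V = 1 ∧ (∀ k, d k ≠ 0) ∧
      A = V * diagonal (fun k => Complex.exp (2 * (Real.arctan (d k) : ℝ) * Complex.I)) * star V ∧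
      Hmat A = V * diagonal (fun k => ((-2 * Real.arctan (d k) : ℝ) : ℂ)) * star V := by
  have hu : IsUnit (A + 1) := isUnit_add_one h2
  have hud : IsUnit (A + 1).det := (Matrix.isUnit_iff_isUnit_det _).mp hu
  have hK : (cay A).IsHermitian := cay_isHermitian hA h2
  set V : Matrix (Fin n) (Fin n) ℂ := (hK.eigenvectorUnitary : Matrix (Fin n) (Fin n) ℂ) with hV
  set d : Fin n → ℝ := hK.eigenvalues with hd
  have hV1 : V * star V = 1 := (Matrix.mem_unitaryGroup_iff).mp (hK.eigenvectorUnitary).2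
  have hV2 : star V * V = 1 := (Matrix.mem_unitaryGroup_iff').mp (hK.eigenvectorUnitary).2
  have hKdiag : cay A = V * diagonal (fun k => ((d k : ℝ) : ℂ)) * star V := by
    have := hK.spectral_theorem
    convert this using 2
    rw [Unitary.conjStarAlgAut_apply]; rfl
  -- eigenvalues are nonzero
  have hdet : (cay A).det ≠ 0 := by
    rw [cay, Matrix.det_smul, Matrix.det_mul, Matrix.det_nonsing_inv]
    have h1' : (A - 1).det ≠ 0 := by
      have := (Matrix.isUnit_iff_isUnit_det _).mp (isUnit_sub_one h1)
      exact this.ne_zero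
    have h2' : Ring.inverse (A + 1).det ≠ 0 := by
      rw [Ring.inverse_eq_inv]
      exact inv_ne_zero hud.ne_zero
    have h3' : (-Complex.I) ^ (Fintype.card (Fin n)) ≠ 0 := by
      apply pow_ne_zero
      simpa using Complex.I_ne_zero
    exact mul_ne_zero h3' (mul_ne_zero h1' h2')
  have hdk : ∀ k, d k ≠ 0 := by
    intro k hk
    apply hdet
    rw [hKdiag, Matrix.det_mul, Matrix.det_mul, Matrix.det_diagonal]
    have hz : ((d k : ℝ) : ℂ) = 0 := by rw [hk]; simp
    rw [Finset.prod_eq_zero (Finset.mem_univ k) hz]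
    simp
  refine ⟨V, d, hV1, hV2, hdk, ?_, ?_⟩
  · -- A = V diag(exp(2 arctan dk I)) V*
    set B := (A + 1)⁻¹ with hB
    have hB1 : (A + 1) * B = 1 := Matrix.mul_nonsing_inv _ hud
    have hIK : Complex.I • cay A = (A - 1) * B := by
      rw [cay, smul_smul]
      have h : Complex.I * -Complex.I = 1 := by
        rw [mul_neg, Complex.I_mul_I, neg_neg]
      rw [h, one_smul]
    have e1 : A * (A + 1) * B = A := by rw [mul_assoc, hB1, mul_one]
    have h_main : A * (1 - Complex.I • cay A) = 1 + Complex.I • cay A := by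
      rw [hIK]
      have h0 : A * (1 - (A - 1) * B) - (1 + (A - 1) * B)
          = (A - A * (A + 1) * B) - (1 - (A + 1) * B) := by noncomm_ring
      rw [e1, hB1, sub_self, sub_self, sub_zero] at h0
      exact sub_eq_zero.mp h0
    have hsub : (1 : Matrix (Fin n) (Fin n) ℂ) - Complex.I • cay A
        = V * diagonal (fun k => 1 - Complex.I * (d k : ℂ)) * star V := by
      rw [hKdiag, conjd_smul, conjd_one hV1, conjd_sub]
    have hadd : (1 : Matrix (Fin n) (Fin n) ℂ) + Complex.I • cay A
        = V * diagonal (fun k => 1 + Complex.I * (d k : ℂ)) * star V := by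
      rw [hKdiag, conjd_smul, conjd_one hV1, conjd_add]
    set W : Matrix (Fin n) (Fin n) ℂ :=
      V * diagonal (fun k => ((1 : ℂ) - Complex.I * (d k : ℂ))⁻¹) * star V with hW
    have hWinv : (1 - Complex.I • cay A) * W = 1 := by
      rw [hsub, hW, conjd_mul hV2]
      have h : (fun k => ((1:ℂ) - Complex.I * (d k : ℂ)) * ((1:ℂ) - Complex.I * (d k : ℂ))⁻¹)
          = fun _ => (1:ℂ) := funext fun k => mul_inv_cancel₀ (one_sub_I_mul_ne (d k))
      rw [h, ← conjd_one hV1]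
    calc A = A * ((1 - Complex.I • cay A) * W) := by rw [hWinv, mul_one]
      _ = (A * (1 - Complex.I • cay A)) * W := by rw [mul_assoc]
      _ = (1 + Complex.I • cay A) * W := by rw [h_main]
      _ = V * diagonal (fun k => Complex.exp (2 * (Real.arctan (d k) : ℝ) * Complex.I)) * star V := by
          rw [hadd, hW, conjd_mul hV2]
          congr 1
          congr 1
          exact congrArg Matrix.diagonal (funext fun k => scalar_exp' (d k))
  · -- Hmat A = V diag(-2 arctan dk) V*
    have hNdiag : ∀ t : ℝ, (1 : Matrix (Fin n) (Fin n) ℂ) + ((t : ℂ) • cay A) ^ 2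
        = V * diagonal (fun k => 1 + (t:ℂ)^2 * (d k : ℂ)^2) * star V := by
      intro t
      have hsq : ((t : ℂ) • cay A) ^ 2
          = V * diagonal (fun k => (t:ℂ)^2 * (d k:ℂ)^2) * star V := by
        have h : ((t : ℂ) • cay A) ^ 2 = (t:ℂ)^2 • (cay A * cay A) := by
          rw [smul_pow, show cay A ^ 2 = cay A * cay A from pow_two (cay A)]
        rw [h, hKdiag, conjd_mul hV2, conjd_smul]
        congr 1
        congr 1
        exact congrArg Matrix.diagonal (funext fun k => by ring)
      rw [hsq, conjd_one hV1, conjd_add]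
    have hden : ∀ (t : ℝ) (k : Fin n), ((1:ℂ) + (t:ℂ)^2 * (d k:ℂ)^2) ≠ 0 := by
      intro t k
      have h : ((1:ℂ) + (t:ℂ)^2 * (d k:ℂ)^2) = ((1 + t^2 * (d k)^2 : ℝ) : ℂ) := by push_cast; ring
      rw [h, Complex.ofReal_ne_zero]
      positivity
    have hInt : ∀ t : ℝ, cay A * ((1 : Matrix (Fin n) (Fin n) ℂ) + ((t : ℂ) • cay A) ^ 2)⁻¹
        = V * diagonal (fun k => ((d k / (1 + t^2 * (d k)^2) : ℝ) : ℂ)) * star V := by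
      intro t
      rw [hNdiag t, conjd_inv hV1 hV2 _ (hden t), hKdiag, conjd_mul hV2]
      congr 1
      congr 1
      refine congrArg Matrix.diagonal (funext fun k => ?_)
      push_cast
      rw [div_eq_mul_inv]
    ext i j
    rw [Hmat]
    show (-2 : ℂ) * (∫ t in (0:ℝ)..1,
        ((cay A * (1 + ((t : ℂ) • cay A) ^ 2)⁻¹ : Matrix (Fin n) (Fin n) ℂ)) i j)
      = (V * diagonal (fun k => ((-2 * Real.arctan (d k) : ℝ) : ℂ)) * star V) i j
    have hfun : (fun t : ℝ =>
        ((cay A * (1 + ((t : ℂ) • cay A) ^ 2)⁻¹ : Matrix (Fin n) (Fin n) ℂ)) i j)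
        = fun t : ℝ => ∑ k, V i k * star (V j k) * ((d k / (1 + t^2 * (d k)^2) : ℝ) : ℂ) := by
      funext t
      rw [hInt t, conjd_entry]
    rw [hfun]
    have hint : ∀ k : Fin n, IntervalIntegrable
        (fun t : ℝ => V i k * star (V j k) * ((d k / (1 + t^2 * (d k)^2) : ℝ) : ℂ))
        MeasureTheory.volume 0 1 := by
      intro k
      apply Continuous.intervalIntegrable
      exact continuous_const.mul (Complex.continuous_ofReal.comp
        (continuous_const.div
          (continuous_const.add ((continuous_pow 2).mul continuous_const))
          (fun t => by positivity)))
    rw [intervalIntegral.integral_finset_sum (fun k _ => hint k)]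
    rw [conjd_entry]
    rw [Finset.mul_sum]
    apply Finset.sum_congr rfl
    intro k _
    rw [intervalIntegral.integral_const_mul]
    have hi : (∫ t in (0:ℝ)..1, ((d k / (1 + t^2 * (d k)^2) : ℝ) : ℂ))
        = ((Real.arctan (d k) : ℝ) : ℂ) := by
      rw [intervalIntegral.integral_ofReal, scalar_integral (d k)]
    rw [hi]
    push_cast
    ring

variable {n : ℕ}

lemma isUnit_one_add_sq {K : Matrix (Fin n) (Fin n) ℂ} (hK : K.IsHermitian) (t : ℝ) :
    IsUnit ((1 : Matrix (Fin n) (Fin n) ℂ) + ((t : ℂ) • K) ^ 2) := by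
  set V : Matrix (Fin n) (Fin n) ℂ := (hK.eigenvectorUnitary : Matrix (Fin n) (Fin n) ℂ) with hV
  set d : Fin n → ℝ := hK.eigenvalues with hd
  have hV1 : V * star V = 1 := (Matrix.mem_unitaryGroup_iff).mp (hK.eigenvectorUnitary).2
  have hV2 : star V * V = 1 := (Matrix.mem_unitaryGroup_iff').mp (hK.eigenvectorUnitary).2
  have hKdiag : K = V * diagonal (fun k => ((d k : ℝ) : ℂ)) * star V := by
    have := hK.spectral_theorem
    convert this using 2
    rw [Unitary.conjStarAlgAut_apply]; rfl
  have hsq : ((t : ℂ) • K) ^ 2 = V * diagonal (fun k => (t:ℂ)^2 * (d k:ℂ)^2) * star V := by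
    have h : ((t : ℂ) • K) ^ 2 = (t:ℂ)^2 • (K * K) := by
      rw [smul_pow, show K ^ 2 = K * K from pow_two K]
    rw [h, hKdiag, conjd_mul hV2, conjd_smul]
    congr 1
    congr 1
    exact congrArg Matrix.diagonal (funext fun k => by ring)
  have hden : ∀ k : Fin n, ((1:ℂ) + (t:ℂ)^2 * (d k:ℂ)^2) ≠ 0 := by
    intro k
    have h : ((1:ℂ) + (t:ℂ)^2 * (d k:ℂ)^2) = ((1 + t^2 * (d k)^2 : ℝ) : ℂ) := by push_cast; ring
    rw [h, Complex.ofReal_ne_zero]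
    positivity
  have hNdiag : (1 : Matrix (Fin n) (Fin n) ℂ) + ((t : ℂ) • K) ^ 2
      = V * diagonal (fun k => 1 + (t:ℂ)^2 * (d k : ℂ)^2) * star V := by
    rw [hsq, conjd_one hV1, conjd_add]
  rw [hNdiag]
  apply (Matrix.isUnit_iff_isUnit_det _).mpr
  rw [isUnit_iff_ne_zero]
  rw [Matrix.det_mul, Matrix.det_mul, Matrix.det_diagonal]
  have hVdet : V.det * (star V).det ≠ 0 := by
    rw [← Matrix.det_mul, hV1, Matrix.det_one]
    exact one_ne_zero
  have : V.det ≠ 0 := fun h => hVdet (by rw [h, zero_mul])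
  have h2 : (star V).det ≠ 0 := fun h => hVdet (by rw [h, mul_zero])
  refine mul_ne_zero (mul_ne_zero this (Finset.prod_ne_zero_iff.mpr fun k _ => hden k)) h2

variable {A : Matrix (Fin n) (Fin n) ℂ}

lemma Hmat_isHermitian (hA : A ∈ Matrix.unitaryGroup (Fin n) ℂ)
    (h1 : (1 : ℂ) ∉ spectrum ℂ A) (h2 : (-1 : ℂ) ∉ spectrum ℂ A) : (Hmat A).IsHermitian := by
  obtain ⟨V, d, hV1, hV2, hdk, hAdiag, hHdiag⟩ := key hA h1 h2
  show (Hmat A)ᴴ = Hmat A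
  rw [← Matrix.star_eq_conjTranspose, hHdiag, conjd_star]
  congr 1
  congr 1
  refine congrArg Matrix.diagonal (funext fun k => ?_)
  exact Complex.conj_ofReal _

lemma Hmat_spectrum (hA : A ∈ Matrix.unitaryGroup (Fin n) ℂ)
    (h1 : (1 : ℂ) ∉ spectrum ℂ A) (h2 : (-1 : ℂ) ∉ spectrum ℂ A) :
    ∀ z ∈ spectrum ℂ (Hmat A), ∃ r : ℝ,
      z = (r : ℂ) ∧ r ∈ Set.Ioo (-Real.pi) Real.pi ∧ r ≠ 0 := by
  obtain ⟨V, d, hV1, hV2, hdk, hAdiag, hHdiag⟩ := key hA h1 h2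
  intro z hz
  rw [hHdiag, conjd_spectrum hV1 hV2] at hz
  obtain ⟨k, hk⟩ := hz
  refine ⟨-2 * Real.arctan (d k), hk.symm, ?_, ?_⟩
  · have hb := Real.arctan_mem_Ioo (d k)
    have hpi := Real.pi_pos
    constructor
    · nlinarith [hb.1, hb.2]
    · nlinarith [hb.1, hb.2]
  · intro h
    have : Real.arctan (d k) = 0 := by linarith
    exact hdk k (Real.arctan_eq_zero_iff.mp this)

lemma expH_diag_entry (r c : ℝ) :
    ((r:ℂ) * Complex.I) * ((c : ℝ) : ℂ) = ((r * c : ℝ) : ℂ) * Complex.I := by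
  push_cast; ring

lemma expH_formula (hA : A ∈ Matrix.unitaryGroup (Fin n) ℂ)
    (h1 : (1 : ℂ) ∉ spectrum ℂ A) (h2 : (-1 : ℂ) ∉ spectrum ℂ A) :
    (∀ r : ℝ, NormedSpace.exp (((r:ℂ) * Complex.I) • Hmat A)
        ∈ Matrix.unitaryGroup (Fin n) ℂ) ∧
    (∀ r r' : ℝ, NormedSpace.exp (((r:ℂ) * Complex.I) • Hmat A)
        * NormedSpace.exp (((r':ℂ) * Complex.I) • Hmat A)
        = NormedSpace.exp ((((r + r' : ℝ):ℂ) * Complex.I) • Hmat A)) ∧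
    NormedSpace.exp ((((-1 : ℝ):ℂ) * Complex.I) • Hmat A) = A := by
  obtain ⟨V, d, hV1, hV2, hdk, hAdiag, hHdiag⟩ := key hA h1 h2
  have hE : ∀ r : ℝ, NormedSpace.exp (((r:ℂ) * Complex.I) • Hmat A)
      = V * diagonal (fun k => Complex.exp (((r * (-2 * Real.arctan (d k)) : ℝ) : ℂ)
          * Complex.I)) * star V := by
    intro r
    rw [hHdiag, conjd_smul, conjd_exp hV1 hV2]
    congr 1
    congr 1
    exact congrArg Matrix.diagonal (funext fun k => by rw [expH_diag_entry])
  have hconj : ∀ x : ℝ, star (Complex.exp (((x:ℝ):ℂ) * Complex.I))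
      = Complex.exp ((((-x:ℝ)):ℂ) * Complex.I) := by
    intro x
    rw [Complex.star_def, ← Complex.exp_conj]
    congr 1
    simp [Complex.conj_ofReal]
  have hmul : ∀ x y : ℝ, Complex.exp (((x:ℝ):ℂ) * Complex.I)
      * Complex.exp (((y:ℝ):ℂ) * Complex.I)
      = Complex.exp ((((x+y:ℝ)):ℂ) * Complex.I) := by
    intro x y
    rw [← Complex.exp_add]
    congr 1
    push_cast; ring
  refine ⟨?_, ?_, ?_⟩
  · intro r
    rw [Matrix.mem_unitaryGroup_iff, hE r, conjd_star, conjd_mul hV2]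
    have h : (fun k => Complex.exp (((r * (-2 * Real.arctan (d k)) : ℝ) : ℂ) * Complex.I)
        * star (Complex.exp (((r * (-2 * Real.arctan (d k)) : ℝ) : ℂ) * Complex.I)))
        = fun _ => (1:ℂ) := by
      funext k
      rw [hconj, hmul]
      norm_num
    rw [h, ← conjd_one hV1]
  · intro r r'
    rw [hE r, hE r', hE (r + r'), conjd_mul hV2]
    congr 1
    congr 1
    refine congrArg Matrix.diagonal (funext fun k => ?_)
    rw [hmul]
    congr 2
    ring
  · rw [hE (-1), hAdiag]
    congr 1
    congr 1
    refine congrArg Matrix.diagonal (funext fun k => ?_)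
    congr 1
    push_cast; ring


variable {n : ℕ} {X : Type*} [TopologicalSpace X]

lemma continuous_matrix_inv {B : X → Matrix (Fin n) (Fin n) ℂ} (hB : Continuous B)
    (hu : ∀ x, IsUnit (B x)) : Continuous fun x => (B x)⁻¹ := by
  have h : (fun x => (B x)⁻¹) = fun x => (Ring.inverse (B x).det) • (B x).adjugate :=
    funext fun x => Matrix.inv_def _
  rw [h, Ring.inverse_eq_inv']
  rw [continuous_iff_continuousAt]
  intro x
  have hdet : (B x).det ≠ 0 := ((Matrix.isUnit_iff_isUnit_det _).mp (hu x)).ne_zero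
  exact ((hB.matrix_det.continuousAt).inv₀ hdet).smul hB.matrix_adjugate.continuousAt

lemma continuous_cay {A : X → Matrix (Fin n) (Fin n) ℂ} (hA : Continuous A)
    (hs2 : ∀ x, (-1 : ℂ) ∉ spectrum ℂ (A x)) : Continuous fun x => cay (A x) := by
  unfold cay
  refine Continuous.const_smul (g := fun x => (A x - 1) * (A x + 1)⁻¹) ?_ (-Complex.I)
  exact (hA.sub continuous_const).mul
    (continuous_matrix_inv (hA.add continuous_const) fun x => isUnit_add_one (hs2 x))

lemma continuous_Hmat {A : X → Matrix (Fin n) (Fin n) ℂ} (hA : Continuous A)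
    (hmem : ∀ x, A x ∈ Matrix.unitaryGroup (Fin n) ℂ)
    (hs2 : ∀ x, (-1 : ℂ) ∉ spectrum ℂ (A x)) :
    Continuous fun x => Hmat (A x) := by
  have hK : Continuous fun x => cay (A x) := continuous_cay hA hs2
  have hN : Continuous fun p : X × ℝ =>
      ((1 : Matrix (Fin n) (Fin n) ℂ) + ((p.2 : ℂ) • cay (A p.1)) ^ 2)⁻¹ := by
    apply continuous_matrix_inv
    · apply Continuous.add continuous_const
      apply Continuous.pow
      exact Continuous.smul (Complex.continuous_ofReal.comp continuous_snd)
        (hK.comp continuous_fst)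
    · exact fun p => isUnit_one_add_sq (cay_isHermitian (hmem p.1) (hs2 p.1)) p.2
  have hP : Continuous fun p : X × ℝ =>
      cay (A p.1) * ((1 : Matrix (Fin n) (Fin n) ℂ) + ((p.2 : ℂ) • cay (A p.1)) ^ 2)⁻¹ :=
    (hK.comp continuous_fst).mul hN
  apply continuous_matrix
  intro i j
  show Continuous fun x => (-2 : ℂ) *
    ∫ t in (0:ℝ)..1, ((cay (A x) * (1 + ((t : ℂ) • cay (A x)) ^ 2)⁻¹
      : Matrix (Fin n) (Fin n) ℂ)) i j
  apply Continuous.mul continuous_const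
  exact intervalIntegral.continuous_parametric_intervalIntegral_of_continuous'
    (f := fun x t => ((cay (A x) * (1 + ((t : ℂ) • cay (A x)) ^ 2)⁻¹
      : Matrix (Fin n) (Fin n) ℂ)) i j)
    (hP.matrix_elem i j) 0 1


lemma continuous_expIH {Y : Type*} [TopologicalSpace Y] {H : Y → Matrix (Fin n) (Fin n) ℂ}
    {f : Y → ℝ} (hf : Continuous f) (hH : Continuous H) :
    Continuous fun y => NormedSpace.exp (((f y : ℂ) * Complex.I) • H y) := by
  letI : NormedRing (Matrix (Fin n) (Fin n) ℂ) := Matrix.linftyOpNormedRing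
  letI : NormedAlgebra ℂ (Matrix (Fin n) (Fin n) ℂ) := Matrix.linftyOpNormedAlgebra
  letI : NormedAlgebra ℚ (Matrix (Fin n) (Fin n) ℂ) := Matrix.linftyOpNormedAlgebra
  haveI : CompleteSpace (Matrix (Fin n) (Fin n) ℂ) := FiniteDimensional.complete ℂ _
  exact NormedSpace.exp_continuous.comp
    (((Complex.continuous_ofReal.comp hf).mul continuous_const).smul hH)

lemma spectrum_conj {M W W' : Matrix (Fin n) (Fin n) ℂ} (h1 : W * W' = 1) (h2 : W' * W = 1) :
    spectrum ℂ (W * M * W') = spectrum ℂ M := by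
  let u : (Matrix (Fin n) (Fin n) ℂ)ˣ := ⟨W, W', h1, h2⟩
  have h : W * M * W' = (u : Matrix (Fin n) (Fin n) ℂ) * M * ((u⁻¹ : (Matrix (Fin n) (Fin n) ℂ)ˣ)
      : Matrix (Fin n) (Fin n) ℂ) := rfl
  rw [h, spectrum.units_conjugate]


end GappedAux


set_option maxHeartbeats 1600000 in
/-- every unitary evolution gapped at 0 and π is homotopic, through gapped
unitary evolutions, to the composition of a unitary loop with a gapped constant evolution. -/
theorem gapped_evolution_homotopic_loop_comp_const
    {X : Type*} [TopologicalSpace X] {n : ℕ} (hn : 1 ≤ n)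
    (U : X × unitInterval → Matrix (Fin n) (Fin n) ℂ) (hU : IsGappedEvolution U) :
    ∃ L C : X × unitInterval → Matrix (Fin n) (Fin n) ℂ,
      IsUnitaryLoop L ∧ IsGappedConstantEvolution C ∧
      HomotopicThrough IsGappedEvolution U (compEvol L C) := by
  classical
  obtain ⟨⟨hUc, hUu, hU0⟩, hGap⟩ := hU
  -- the family of endpoint unitaries
  set A : X → Matrix (Fin n) (Fin n) ℂ := fun x => U (x, 1) with hAdef
  have hAc : Continuous A := hUc.comp (continuous_id.prodMk continuous_const)
  have hAu : ∀ x, A x ∈ Matrix.unitaryGroup (Fin n) ℂ := fun x => hUu (x, 1)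
  have h1 : ∀ x, (1 : ℂ) ∉ spectrum ℂ (A x) := fun x => (hGap x).1
  have h2 : ∀ x, (-1 : ℂ) ∉ spectrum ℂ (A x) := fun x => (hGap x).2
  -- the Hamiltonian family
  set H : X → Matrix (Fin n) (Fin n) ℂ := fun x => GappedAux.Hmat (A x) with hHdef
  have hHc : Continuous H := GappedAux.continuous_Hmat hAc hAu h2
  have hHfam : IsGappedHermitianFamily H := by
    refine ⟨hHc, fun x => ⟨GappedAux.Hmat_isHermitian (hAu x) (h1 x) (h2 x),
      GappedAux.Hmat_spectrum (hAu x) (h1 x) (h2 x)⟩⟩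
  -- the exponential family
  set E : ℝ → X → Matrix (Fin n) (Fin n) ℂ :=
    fun r x => NormedSpace.exp (((r : ℂ) * Complex.I) • H x) with hEdef
  have hEu : ∀ (r : ℝ) (x : X), E r x ∈ Matrix.unitaryGroup (Fin n) ℂ :=
    fun r x => (GappedAux.expH_formula (hAu x) (h1 x) (h2 x)).1 r
  have hEmul : ∀ (r r' : ℝ) (x : X), E r x * E r' x = E (r + r') x := by
    intro r r' x
    have := (GappedAux.expH_formula (hAu x) (h1 x) (h2 x)).2.1 r r'
    exact this
  have hEneg1 : ∀ x : X, E (-1) x = A x := by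
    intro x
    have := (GappedAux.expH_formula (hAu x) (h1 x) (h2 x)).2.2
    exact this
  have hE0 : ∀ x : X, E 0 x = 1 := by
    intro x
    show NormedSpace.exp ((((0:ℝ) : ℂ) * Complex.I) • H x) = 1
    rw [show (((0:ℝ) : ℂ) * Complex.I) • H x = 0 by norm_num]
    exact NormedSpace.exp_zero
  have hEgen1 : ∀ {f : X × unitInterval → ℝ} {g : X × unitInterval → X},
      Continuous f → Continuous g → Continuous fun y => E (f y) (g y) := by
    intro f g hf hg
    exact GappedAux.continuous_expIH hf (hHc.comp hg)
  have hEgen2 : ∀ {f : unitInterval × (X × unitInterval) → ℝ}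
      {g : unitInterval × (X × unitInterval) → X},
      Continuous f → Continuous g → Continuous fun y => E (f y) (g y) := by
    intro f g hf hg
    exact GappedAux.continuous_expIH hf (hHc.comp hg)
  have hCeq : ∀ p : X × unitInterval, constEvol H p = E (-(p.2 : ℝ)) p.1 := by
    intro p
    show NormedSpace.exp ((-(((p.2 : ℝ) : ℂ) * Complex.I)) • H p.1)
      = NormedSpace.exp ((((-(p.2 : ℝ) : ℝ) : ℂ) * Complex.I) • H p.1)
    congr 1
    push_cast
    ring
  -- helpers about projIcc
  have hproj : ∀ r : ℝ, 0 ≤ r → r ≤ 1 →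
      ((Set.projIcc 0 1 zero_le_one r : unitInterval) : ℝ) = r := by
    intro r h0 h1'
    rw [Set.coe_projIcc]
    rw [min_eq_right h1', max_eq_right h0]
  have hproj1 : Set.projIcc 0 1 zero_le_one (1 : ℝ) = 1 := by
    apply Subtype.ext
    rw [Set.coe_projIcc]
    norm_num
  have hproj0 : Set.projIcc 0 1 zero_le_one (0 : ℝ) = 0 := by
    apply Subtype.ext
    rw [Set.coe_projIcc]
    norm_num
  -- the loop and the constant evolution
  have hLc : Continuous fun p : X × unitInterval => U p * E ((p.2 : ℝ)) p.1 :=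
    hUc.matrix_mul (hEgen1 (continuous_subtype_val.comp continuous_snd) continuous_fst)
  refine ⟨fun p => U p * E ((p.2 : ℝ)) p.1, constEvol H, ?_, ⟨H, hHfam, rfl⟩, ?_⟩
  · -- IsUnitaryLoop
    refine ⟨⟨hLc, fun p => mul_mem (hUu p) (hEu _ _), ?_⟩, ?_⟩
    · intro x
      show U (x, 0) * E (((0 : unitInterval) : ℝ)) x = 1
      rw [hU0 x, show ((0 : unitInterval) : ℝ) = 0 from rfl, hE0, one_mul]
    · intro x
      show U (x, 1) * E (((1 : unitInterval) : ℝ)) x = 1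
      rw [show ((1 : unitInterval) : ℝ) = 1 from rfl]
      calc U (x, 1) * E 1 x = E (-1) x * E 1 x := by rw [hEneg1 x]
        _ = E (-1 + 1) x := hEmul (-1) 1 x
        _ = E 0 x := by norm_num
        _ = 1 := hE0 x
  · -- homotopy
    have c0 : ((0 : unitInterval) : ℝ) = 0 := rfl
    have c1 : ((1 : unitInterval) : ℝ) = 1 := rfl
    set F : unitInterval × (X × unitInterval) → Matrix (Fin n) (Fin n) ℂ := fun q =>
      if (q.1 : ℝ) ≤ 1/2 then
        U (q.2.1, Set.projIcc 0 1 zero_le_one (min 1 ((1 + 2*(q.1:ℝ)) * (q.2.2:ℝ))))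
      else if ((q.2.2 : ℝ)) ≤ 1/2 then
        U (q.2.1, Set.projIcc 0 1 zero_le_one (2 * (q.2.2:ℝ)))
          * E ((2*(q.1:ℝ) - 1) * (2 * (q.2.2:ℝ))) q.2.1
      else
        E (-((2*(q.1:ℝ) - 1) * (2 * (q.2.2:ℝ) - 1))) q.2.1
          * (U (q.2.1, 1) * E (2*(q.1:ℝ) - 1) q.2.1) with hFdef
    have tc : Continuous fun q : unitInterval × (X × unitInterval) => ((q.2.2 : ℝ)) :=
      continuous_subtype_val.comp (continuous_snd.comp continuous_snd)
    have sc : Continuous fun q : unitInterval × (X × unitInterval) => ((q.1 : ℝ)) :=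
      continuous_subtype_val.comp continuous_fst
    have xc : Continuous fun q : unitInterval × (X × unitInterval) => q.2.1 :=
      continuous_fst.comp continuous_snd
    have hFc : Continuous F := by
      rw [hFdef]
      refine Continuous.if_le ?_ ?_ sc continuous_const ?_
      · exact hUc.comp (xc.prodMk (continuous_projIcc.comp
          (continuous_const.min ((continuous_const.add (continuous_const.mul sc)).mul tc))))
      · refine Continuous.if_le ?_ ?_ tc continuous_const ?_
        · exact (hUc.comp (xc.prodMk (continuous_projIcc.comp
            (continuous_const.mul tc)))).matrix_mul
            (hEgen2 (((continuous_const.mul sc).sub continuous_const).mul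
              (continuous_const.mul tc)) xc)
        · exact (hEgen2 ((((continuous_const.mul sc).sub continuous_const).mul
            ((continuous_const.mul tc).sub continuous_const)).neg) xc).matrix_mul
            ((hUc.comp (xc.prodMk continuous_const)).matrix_mul
              (hEgen2 ((continuous_const.mul sc).sub continuous_const) xc))
        · -- inner frontier t = 1/2
          intro q hq
          rw [hq, show (2*(1/2:ℝ)) = 1 by norm_num, hproj1, mul_one,
            show (1-1:ℝ) = 0 by norm_num, mul_zero, neg_zero, hE0, one_mul]
      · -- outer frontier s = 1/2
        intro q hq
        rw [hq, show (1 + 2*(1/2:ℝ)) = 2 by norm_num, show (2*(1/2:ℝ) - 1) = 0 by norm_num]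
        by_cases ht : ((q.2.2 : ℝ)) ≤ 1/2
        · rw [if_pos ht, min_eq_right (by linarith : 2*(q.2.2:ℝ) ≤ 1), zero_mul, hE0, mul_one]
        · rw [if_neg ht]
          push_neg at ht
          rw [min_eq_left (by linarith : (1:ℝ) ≤ 2*(q.2.2:ℝ)), hproj1, zero_mul,
            neg_zero, hE0, one_mul, mul_one]
    refine ⟨F, hFc, ?_, ?_, ?_⟩
    · -- each slice is a gapped evolution
      intro s
      refine ⟨⟨hFc.comp (continuous_const.prodMk continuous_id), ?_, ?_⟩, ?_⟩
      · intro p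
        show F (s, p) ∈ Matrix.unitaryGroup (Fin n) ℂ
        rw [hFdef]
        dsimp only
        split_ifs
        · exact hUu _
        · exact mul_mem (hUu _) (hEu _ _)
        · exact mul_mem (hEu _ _) (mul_mem (hUu _) (hEu _ _))
      · intro x
        show F (s, (x, 0)) = 1
        rw [hFdef]
        dsimp only
        rw [c0]
        split_ifs with hs ht
        · rw [mul_zero, min_eq_right (by norm_num : (0:ℝ) ≤ 1), hproj0, hU0]
        · rw [mul_zero, hproj0, hU0, mul_zero, hE0, one_mul]
        · exact absurd (by norm_num : (0:ℝ) ≤ 1/2) ht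
      · intro x
        have hspec : spectrum ℂ (F (s, (x, 1))) = spectrum ℂ (U (x, 1)) := by
          rw [hFdef]
          dsimp only
          rw [c1]
          split_ifs with hs ht
          · rw [mul_one, min_eq_left (by linarith [s.2.1] : (1:ℝ) ≤ 1 + 2*(s:ℝ)), hproj1]
          · exact absurd ht (by norm_num)
          · rw [show (2*(1:ℝ) - 1) = 1 by norm_num, mul_one, ← mul_assoc]
            apply GappedAux.spectrum_conj
            · rw [hEmul, show -(2*(s:ℝ)-1) + (2*(s:ℝ)-1) = 0 by ring]
              exact hE0 x
            · rw [hEmul, show (2*(s:ℝ)-1) + -(2*(s:ℝ)-1) = 0 by ring]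
              exact hE0 x
        constructor
        · show (1:ℂ) ∉ spectrum ℂ (F (s, (x,1)))
          rw [hspec]; exact (hGap x).1
        · show (-1:ℂ) ∉ spectrum ℂ (F (s, (x,1)))
          rw [hspec]; exact (hGap x).2
    · -- at s = 0
      intro y
      show F (0, y) = U y
      rw [hFdef]
      dsimp only
      rw [if_pos (by rw [c0]; norm_num : ((0:unitInterval):ℝ) ≤ 1/2)]
      rw [c0, show (1 + 2*(0:ℝ)) = 1 by norm_num, one_mul,
        min_eq_right y.2.2.2, Set.projIcc_val zero_le_one y.2]
    · -- at s = 1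
      intro y
      show F (1, y) = compEvol (fun p => U p * E ((p.2 : ℝ)) p.1) (constEvol H) y
      rw [hFdef]
      dsimp only
      rw [if_neg (by rw [c1]; norm_num : ¬ ((1:unitInterval):ℝ) ≤ 1/2)]
      unfold compEvol
      rw [c1, show (2*(1:ℝ) - 1) = 1 by norm_num]
      by_cases ht : ((y.2 : ℝ)) ≤ 1/2
      · rw [if_pos ht, if_pos ht]
        dsimp only
        rw [one_mul, hproj (2*(y.2:ℝ)) (mul_nonneg (by norm_num) y.2.2.1) (by linarith)]
      · rw [if_neg ht, if_neg ht]
        push_neg at ht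
        rw [one_mul, hCeq (y.1, Set.projIcc 0 1 zero_le_one (2*(y.2:ℝ) - 1))]
        dsimp only
        rw [hproj (2*(y.2:ℝ) - 1) (by linarith) (by linarith [y.2.2.2]), c1]
end

section
/- Let X be a topological space and n ≥ 1. Let L₁, L₂ be unitary loops and C₁, C₂ gapped constant evolutions on X with values in n×n complex unitary matrices. Then L₁*C₁ and L₂*C₂ are homotopic through unitary evolutions gapped at 0 and π if and only if L₁ is homotopic to L₂ through unitary loops and C₁ is homotopic to C₂ through gapped constant evolutions. -/
open Matrix Set

namespace FloquetAux

open Complex Set Matrix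
open scoped Matrix.Norms.L2Operator

variable {n : ℕ}

noncomputable scoped instance : CStarAlgebra (Matrix (Fin n) (Fin n) ℂ) :=
  Matrix.instCStarAlgebra

noncomputable scoped instance : NormedAlgebra ℚ (Matrix (Fin n) (Fin n) ℂ) :=
  NormedAlgebra.restrictScalars ℚ ℂ _

variable {u : Matrix (Fin n) (Fin n) ℂ}

lemma isStarNormal_of_unitary (hu : u ∈ Matrix.unitaryGroup (Fin n) ℂ) : IsStarNormal u := by
  constructor
  rw [Unitary.mem_iff] at hu
  rw [Commute, SemiconjBy, hu.1, hu.2]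

lemma spec_subset_sphere (hu : u ∈ Matrix.unitaryGroup (Fin n) ℂ) :
    spectrum ℂ u ⊆ Metric.sphere (0 : ℂ) 1 :=
  spectrum.subset_circle_of_unitary hu

open Classical in
/-- Extend a continuous function on the circle to all of `ℂ` (by junk). -/
noncomputable def circleExtend (f : C(Metric.sphere (0:ℂ) 1, ℂ)) : ℂ → ℂ :=
  fun z => if h : z ∈ Metric.sphere (0:ℂ) 1 then f ⟨z, h⟩ else 0

lemma circleExtend_apply (f : C(Metric.sphere (0:ℂ) 1, ℂ)) {z : ℂ}
    (hz : z ∈ Metric.sphere (0:ℂ) 1) : circleExtend f z = f ⟨z, hz⟩ := by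
  simp only [circleExtend]; rw [dif_pos hz]

lemma circleExtend_continuousOn (f : C(Metric.sphere (0:ℂ) 1, ℂ)) :
    ContinuousOn (circleExtend f) (Metric.sphere (0:ℂ) 1) := by
  rw [continuousOn_iff_continuous_restrict]
  have : (Metric.sphere (0:ℂ) 1).restrict (circleExtend f) = f := by
    ext z; exact circleExtend_apply f z.2
  rw [show (Metric.sphere (0:ℂ) 1).domRestrict (circleExtend f) = f from this]; exact f.continuous

lemma circleExtend_continuousOn_spec (hu : u ∈ Matrix.unitaryGroup (Fin n) ℂ)
    (f : C(Metric.sphere (0:ℂ) 1, ℂ)) :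
    ContinuousOn (circleExtend f) (spectrum ℂ u) :=
  (circleExtend_continuousOn f).mono (spec_subset_sphere hu)

lemma dist_cfc_circleExtend_le (f g : C(Metric.sphere (0:ℂ) 1, ℂ))
    (hu : u ∈ Matrix.unitaryGroup (Fin n) ℂ) :
    dist (cfc (circleExtend f) u) (cfc (circleExtend g) u) ≤ dist f g := by
  have hn := isStarNormal_of_unitary hu
  rw [dist_eq_norm, ← cfc_sub _ _ u (circleExtend_continuousOn_spec hu f)
    (circleExtend_continuousOn_spec hu g)]
  refine norm_cfc_le dist_nonneg fun z hz => ?_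
  have hzs := spec_subset_sphere hu hz
  rw [circleExtend_apply f hzs, circleExtend_apply g hzs, ← dist_eq_norm]
  exact ContinuousMap.dist_apply_le_dist _

/-- Continuity of the functional calculus on families of unitaries, for a globally
continuous function. -/
lemma continuous_cfc_of_unitary {Y : Type*} [TopologicalSpace Y] {F : Y → Matrix (Fin n) (Fin n) ℂ}
    (hF : Continuous F) (hFu : ∀ y, F y ∈ Matrix.unitaryGroup (Fin n) ℂ)
    (g : ℂ → ℂ) (hg : Continuous g) :
    Continuous fun y => cfc g (F y) := by
  have hn : ∀ y, IsStarNormal (F y) := fun y => isStarNormal_of_unitary (hFu y)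
  have key : ∀ f : C(Metric.sphere (0:ℂ) 1, ℂ),
      Continuous fun y => cfc (circleExtend f) (F y) := by
    intro f
    induction f using ContinuousMap.induction_on_of_compact with
    | const r =>
      have h1 : ∀ y, cfc (circleExtend (ContinuousMap.const _ r)) (F y)
          = algebraMap ℂ _ r := fun y => by
        rw [cfc_congr (g := fun _ => r) (fun z hz => by
          rw [circleExtend_apply _ (spec_subset_sphere (hFu y) hz)]; rfl)]
        exact cfc_const r (F y) (hn y)
      rw [funext h1]; exact continuous_const
    | id =>
      have h1 : ∀ y, cfc (circleExtend (ContinuousMap.restrict _ (ContinuousMap.id ℂ))) (F y)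
          = F y := fun y => by
        rw [cfc_congr (g := id) (fun z hz => by
          rw [circleExtend_apply _ (spec_subset_sphere (hFu y) hz)]; rfl)]
        exact cfc_id ℂ (F y) (hn y)
      rw [funext h1]; exact hF
    | star_id =>
      have h1 : ∀ y, cfc (circleExtend (star (ContinuousMap.restrict _ (ContinuousMap.id ℂ))))
          (F y) = star (F y) := fun y => by
        rw [cfc_congr (g := fun z => star z) (fun z hz => by
          rw [circleExtend_apply _ (spec_subset_sphere (hFu y) hz)]; rfl)]
        exact cfc_star_id (F y) (hn y)
      rw [funext h1]; exact continuous_star.comp hF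
    | add f₁ f₂ h₁ h₂ =>
      have h1 : ∀ y, cfc (circleExtend (f₁ + f₂)) (F y)
          = cfc (circleExtend f₁) (F y) + cfc (circleExtend f₂) (F y) := fun y => by
        rw [cfc_congr (g := fun z => circleExtend f₁ z + circleExtend f₂ z) (fun z hz => by
          have hzs := spec_subset_sphere (hFu y) hz
          simp [circleExtend_apply _ hzs])]
        exact cfc_add (F y) _ _ (circleExtend_continuousOn_spec (hFu y) f₁)
          (circleExtend_continuousOn_spec (hFu y) f₂)
      rw [funext h1]; exact h₁.add h₂
    | mul f₁ f₂ h₁ h₂ =>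
      have h1 : ∀ y, cfc (circleExtend (f₁ * f₂)) (F y)
          = cfc (circleExtend f₁) (F y) * cfc (circleExtend f₂) (F y) := fun y => by
        rw [cfc_congr (g := fun z => circleExtend f₁ z * circleExtend f₂ z) (fun z hz => by
          have hzs := spec_subset_sphere (hFu y) hz
          simp [circleExtend_apply _ hzs])]
        exact cfc_mul _ _ (F y) (circleExtend_continuousOn_spec (hFu y) f₁)
          (circleExtend_continuousOn_spec (hFu y) f₂)
      rw [funext h1]; exact h₁.mul h₂
    | frequently f hf =>
      refine continuous_iff_continuousAt.mpr fun y₀ => Metric.tendsto_nhds.mpr fun ε hε => ?_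
      obtain ⟨f', hd, hf'⟩ :=
        (hf.and_eventually (Metric.ball_mem_nhds f (by positivity : (0:ℝ) < ε/4))).exists
      have hev : ∀ᶠ y in nhds y₀,
          dist (cfc (circleExtend f') (F y)) (cfc (circleExtend f') (F y₀)) < ε/4 :=
        Metric.tendsto_nhds.mp (hd.continuousAt (x := y₀)) (ε/4) (by positivity)
      filter_upwards [hev] with y hy
      have b1 : dist (cfc (circleExtend f) (F y)) (cfc (circleExtend f') (F y)) ≤ ε/4 :=
        (dist_cfc_circleExtend_le f f' (hFu y)).trans (by
          rw [dist_comm]; exact le_of_lt (Metric.mem_ball.mp hf'))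
      have b3 : dist (cfc (circleExtend f') (F y₀)) (cfc (circleExtend f) (F y₀)) ≤ ε/4 :=
        (dist_cfc_circleExtend_le f' f (hFu y₀)).trans (le_of_lt (Metric.mem_ball.mp hf'))
      calc dist (cfc (circleExtend f) (F y)) (cfc (circleExtend f) (F y₀))
          ≤ _ + _ + _ := dist_triangle4 _ (cfc (circleExtend f') (F y))
            (cfc (circleExtend f') (F y₀)) _
        _ < ε := by linarith
  have heq : (fun y => cfc g (F y)) = fun y =>
      cfc (circleExtend ((ContinuousMap.mk g hg).restrict (Metric.sphere (0:ℂ) 1))) (F y) := by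
    funext y
    refine cfc_congr fun z hz => ?_
    rw [circleExtend_apply _ (spec_subset_sphere (hFu y) hz)]; rfl
  rw [heq]; exact key _


/-- Upper semicontinuity of the spectrum. -/
lemma eventually_spectrum_disjoint {K : Set ℂ} (hK : IsCompact K)
    (a : Matrix (Fin n) (Fin n) ℂ) (ha : ∀ z ∈ K, z ∉ spectrum ℂ a) :
    ∀ᶠ b in nhds a, ∀ z ∈ K, z ∉ spectrum ℂ b := by
  have hcont : Continuous fun p : ℂ × Matrix (Fin n) (Fin n) ℂ =>
      algebraMap ℂ (Matrix (Fin n) (Fin n) ℂ) p.1 - p.2 :=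
    ((continuous_algebraMap ℂ _).comp continuous_fst).sub continuous_snd
  have hU : IsOpen ((fun p : ℂ × Matrix (Fin n) (Fin n) ℂ =>
      algebraMap ℂ (Matrix (Fin n) (Fin n) ℂ) p.1 - p.2) ⁻¹' {x | IsUnit x}) :=
    Units.isOpen.preimage hcont
  have hsub : K ×ˢ ({a} : Set (Matrix (Fin n) (Fin n) ℂ)) ⊆ (fun p : ℂ × Matrix (Fin n) (Fin n) ℂ =>
      algebraMap ℂ (Matrix (Fin n) (Fin n) ℂ) p.1 - p.2) ⁻¹' {x | IsUnit x} := by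
    rintro ⟨z, b⟩ ⟨hz, hb⟩
    rcases Set.mem_singleton_iff.mp hb with rfl
    have := ha z hz
    rw [spectrum.mem_iff, not_not] at this
    exact this
  obtain ⟨V, W, hVo, hWo, hKV, haW, hVW⟩ :=
    generalized_tube_lemma hK isCompact_singleton hU hsub
  filter_upwards [hWo.mem_nhds (haW rfl)] with b hb z hz
  rw [spectrum.mem_iff, not_not]
  exact hVW (Set.mk_mem_prod (hKV hz) hb)

/-- A gapped unitary: a unitary matrix having neither `1` nor `-1` in its spectrum. -/
def GappedU (u : Matrix (Fin n) (Fin n) ℂ) : Prop :=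
  u ∈ Matrix.unitaryGroup (Fin n) ℂ ∧ (1 : ℂ) ∉ spectrum ℂ u ∧ (-1 : ℂ) ∉ spectrum ℂ u

lemma spec_point {z : ℂ} (habs : ‖z‖ = 1) (h1 : z ≠ 1) (h2 : z ≠ -1) :
    z.arg ∈ Set.Ioo (-Real.pi) Real.pi ∧ z.arg ≠ 0 ∧ z ∈ Complex.slitPlane ∧
      Complex.log z = ((z.arg : ℝ) : ℂ) * Complex.I := by
  have hexp : Complex.exp (z.arg * Complex.I) = z := by
    have := Complex.norm_mul_exp_arg_mul_I z
    rwa [habs, Complex.ofReal_one, one_mul] at this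
  have hpi : z.arg ≠ Real.pi := by
    intro h
    apply h2
    rw [← hexp, h, Complex.exp_pi_mul_I]
  have h0 : z.arg ≠ 0 := by
    intro h
    apply h1
    rw [← hexp, h, Complex.ofReal_zero, zero_mul, Complex.exp_zero]
  refine ⟨⟨Complex.neg_pi_lt_arg z, lt_of_le_of_ne (Complex.arg_le_pi z) hpi⟩, h0, ?_, ?_⟩
  · rw [Complex.mem_slitPlane_iff_arg]
    exact ⟨hpi, by intro h; rw [h] at habs; simp at habs⟩
  · apply Complex.ext
    · simp [Complex.log_re, habs]
    · simp [Complex.log_im]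

/-- The "effective Hamiltonian" of a unitary: `i log u` via the functional calculus. -/
noncomputable def Ham (u : Matrix (Fin n) (Fin n) ℂ) : Matrix (Fin n) (Fin n) ℂ :=
  cfc (fun z : ℂ => Complex.I * Complex.log z) u

lemma gappedU_spec_point (hu : GappedU u) {z : ℂ} (hz : z ∈ spectrum ℂ u) :
    z.arg ∈ Set.Ioo (-Real.pi) Real.pi ∧ z.arg ≠ 0 ∧ z ∈ Complex.slitPlane ∧
      Complex.log z = ((z.arg : ℝ) : ℂ) * Complex.I := by
  have habs : ‖z‖ = 1 := by
    have := spec_subset_sphere hu.1 hz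
    simpa using mem_sphere_zero_iff_norm.mp this
  exact spec_point habs (fun h => hu.2.1 (h ▸ hz)) (fun h => hu.2.2 (h ▸ hz))

lemma logFun_continuousOn (hu : GappedU u) :
    ContinuousOn (fun z : ℂ => Complex.I * Complex.log z) (spectrum ℂ u) := by
  intro z hz
  exact (ContinuousAt.continuousWithinAt <|
    continuousAt_const.mul (_root_.continuousAt_clog (gappedU_spec_point hu hz).2.2.1))

lemma logFun_real (hu : GappedU u) {z : ℂ} (hz : z ∈ spectrum ℂ u) :
    Complex.I * Complex.log z = ((-z.arg : ℝ) : ℂ) := by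
  obtain ⟨-, -, -, hlog⟩ := gappedU_spec_point hu hz
  rw [hlog]
  push_cast
  ring_nf
  rw [Complex.I_sq]
  ring

lemma ham_isSelfAdjoint (hu : GappedU u) : IsSelfAdjoint (Ham u) := by
  have hn := isStarNormal_of_unitary hu.1
  rw [isSelfAdjoint_iff, Ham, ← cfc_star _ u]
  refine cfc_congr fun z hz => ?_
  rw [logFun_real hu hz]
  simp

lemma ham_isHermitian (hu : GappedU u) : (Ham u).IsHermitian := by
  have := ham_isSelfAdjoint hu
  rw [isSelfAdjoint_iff, Matrix.star_eq_conjTranspose] at this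
  exact this

lemma ham_spectrum (hu : GappedU u) {w : ℂ} (hw : w ∈ spectrum ℂ (Ham u)) :
    ∃ r : ℝ, w = (r : ℂ) ∧ r ∈ Set.Ioo (-Real.pi) Real.pi ∧ r ≠ 0 := by
  have hn := isStarNormal_of_unitary hu.1
  rw [Ham, cfc_map_spectrum (a := u) (f := fun z : ℂ => Complex.I * Complex.log z) hn
    (logFun_continuousOn hu)] at hw
  obtain ⟨z, hz, rfl⟩ := hw
  obtain ⟨harg, h0, -, -⟩ := gappedU_spec_point hu hz
  refine ⟨-z.arg, logFun_real hu hz, ⟨by simpa using harg.2, by linarith [harg.1]⟩,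
    by simpa using h0⟩


lemma gapped_ne_zero (hu : GappedU u) {z : ℂ} (hz : z ∈ spectrum ℂ u) : z ≠ 0 := by
  intro h
  have := spec_subset_sphere hu.1 hz
  rw [h] at this
  simpa using mem_sphere_zero_iff_norm.mp this

lemma circle_slitPlane {z : ℂ} (habs : ‖z‖ = 1) (h2 : z ≠ -1) :
    z ∈ Complex.slitPlane := by
  rw [Complex.mem_slitPlane_iff_arg]
  refine ⟨fun h => h2 ?_, fun h => by rw [h] at habs; simp at habs⟩
  have := Complex.norm_mul_exp_arg_mul_I z
  rw [habs, Complex.ofReal_one, one_mul, h] at this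
  rw [← this, Complex.exp_pi_mul_I]

/-- `exp` of a `cfc` is the `cfc` of the exponentiated function. -/
lemma exp_cfc (g : ℂ → ℂ) (a : Matrix (Fin n) (Fin n) ℂ) (ha : IsStarNormal a)
    (hg : ContinuousOn g (spectrum ℂ a)) :
    NormedSpace.exp (cfc g a) = cfc (fun z => Complex.exp (g z)) a := by
  have hb : IsStarNormal (cfc g a) := cfc_predicate _ a
  rw [← CFC.complex_exp_eq_normedSpace_exp (a := cfc g a) hb,
    ← cfc_comp Complex.exp g a ha Complex.continuous_exp.continuousOn hg]
  exact cfc_congr fun z _ => rfl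

lemma smul_eq_cfc (c : ℂ) (a : Matrix (Fin n) (Fin n) ℂ) (ha : IsStarNormal a) :
    c • a = cfc (fun z : ℂ => c * z) a := (cfc_const_mul_id c a ha).symm

/-- `exp (c • a) = cfc (fun z => exp (c * z)) a` for normal `a`. -/
lemma exp_smul_eq_cfc (c : ℂ) (a : Matrix (Fin n) (Fin n) ℂ) (ha : IsStarNormal a) :
    NormedSpace.exp (c • a) = cfc (fun z : ℂ => Complex.exp (c * z)) a := by
  rw [smul_eq_cfc c a ha,
    exp_cfc (fun z : ℂ => c * z) a ha (by fun_prop : Continuous fun z : ℂ => c * z).continuousOn]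

lemma exp_smul_mul_exp_smul (a b : ℂ) (H : Matrix (Fin n) (Fin n) ℂ) :
    NormedSpace.exp (a • H) * NormedSpace.exp (b • H)
      = NormedSpace.exp ((a + b) • H) := by
  rw [add_smul]
  exact (NormedSpace.exp_add_of_commute (((Commute.refl H).smul_left a).smul_right b)).symm

/-- `exp (c • H)` is unitary when `H` is selfadjoint and `c` is purely imaginary. -/
lemma exp_smul_mem_unitary {H : Matrix (Fin n) (Fin n) ℂ} (hH : _root_.IsSelfAdjoint H)
    (c : ℂ) (hc : star c = -c) :
    NormedSpace.exp (c • H) ∈ Matrix.unitaryGroup (Fin n) ℂ := by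
  rw [Matrix.mem_unitaryGroup_iff]
  rw [NormedSpace.star_exp, star_smul, hc, hH.star_eq, exp_smul_mul_exp_smul]
  simp [NormedSpace.exp_zero]

lemma exp_I_smul_ham_mul (hu : GappedU u) :
    NormedSpace.exp (Complex.I • Ham u) * u = 1 := by
  have hn := isStarNormal_of_unitary hu.1
  have h1 : Complex.I • Ham u
      = cfc (fun z : ℂ => Complex.I * (Complex.I * Complex.log z)) u := by
    rw [Ham, cfc_const_mul Complex.I _ u (logFun_continuousOn hu)]
  have hc : ContinuousOn (fun z : ℂ => Complex.I * (Complex.I * Complex.log z))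
      (spectrum ℂ u) := continuousOn_const.mul (logFun_continuousOn hu)
  rw [h1, exp_cfc _ u hn hc]
  have hid : cfc (id : ℂ → ℂ) u = u := cfc_id ℂ u hn
  have hec : ContinuousOn (fun z : ℂ => Complex.exp (Complex.I * (Complex.I * Complex.log z)))
      (spectrum ℂ u) := Complex.continuous_exp.comp_continuousOn hc
  nth_rewrite 2 [← hid]
  rw [← cfc_mul _ _ u hec continuousOn_id]
  rw [← cfc_one (R := ℂ) u hn]
  refine cfc_congr fun z hz => ?_
  have hz0 : z ≠ 0 := gapped_ne_zero hu hz
  have : Complex.I * (Complex.I * Complex.log z) = -Complex.log z := by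
    rw [← mul_assoc, Complex.I_mul_I]; ring
  simp only [id, this, Complex.exp_neg, Complex.exp_log hz0]
  exact inv_mul_cancel₀ hz0

lemma exp_neg_I_mul_ne {r : ℝ} (h1 : -Real.pi < r) (h2 : r < Real.pi) (h0 : r ≠ 0) :
    Complex.exp (-Complex.I * (r : ℂ)) ≠ 1 ∧ Complex.exp (-Complex.I * (r : ℂ)) ≠ -1 := by
  have hpi := Real.pi_pos
  constructor
  · intro h
    rw [Complex.exp_eq_one_iff] at h
    obtain ⟨k, hk⟩ := h
    have him := congrArg Complex.im hk
    simp [Complex.mul_im] at him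
    -- him : -r = k * (2 * π) (roughly)
    rcases lt_trichotomy (k : ℝ) 0 with hkn | hkz | hkp
    · have : (k : ℝ) ≤ -1 := by exact_mod_cast Int.le_of_lt_add_one (by exact_mod_cast hkn)
      nlinarith
    · rw [hkz] at him; apply h0; linarith
    · have : (1 : ℝ) ≤ k := by exact_mod_cast hkp
      nlinarith
  · intro h
    rw [show (-1 : ℂ) = Complex.exp (Real.pi * Complex.I) from Complex.exp_pi_mul_I.symm,
      Complex.exp_eq_exp_iff_exists_int] at h
    obtain ⟨k, hk⟩ := h
    have him := congrArg Complex.im hk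
    simp [Complex.mul_im, Complex.add_im] at him
    rcases lt_trichotomy (k : ℝ) 0 with hkn | hkz | hkp
    · have : (k : ℝ) ≤ -1 := by exact_mod_cast Int.le_of_lt_add_one (by exact_mod_cast hkn)
      nlinarith
    · rw [hkz] at him; nlinarith
    · have : (1 : ℝ) ≤ k := by exact_mod_cast hkp
      nlinarith

/-- The spectral condition appearing in `IsGappedHermitianFamily`. -/
def GapSpec (H : Matrix (Fin n) (Fin n) ℂ) : Prop :=
  ∀ z ∈ spectrum ℂ H, ∃ r : ℝ, z = (r : ℂ) ∧ r ∈ Set.Ioo (-Real.pi) Real.pi ∧ r ≠ 0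

lemma gappedU_exp {H : Matrix (Fin n) (Fin n) ℂ} (hH : _root_.IsSelfAdjoint H)
    (hs : GapSpec H) : GappedU (NormedSpace.exp ((-Complex.I) • H)) := by
  have ha : IsStarNormal H := hH.isStarNormal
  have hmem : NormedSpace.exp ((-Complex.I) • H) ∈ Matrix.unitaryGroup (Fin n) ℂ :=
    exp_smul_mem_unitary hH _ (by simp)
  refine ⟨hmem, ?_, ?_⟩ <;>
  · rw [exp_smul_eq_cfc _ H ha,
      cfc_map_spectrum (a := H) (f := fun z : ℂ => Complex.exp (-Complex.I * z)) ha
        (by fun_prop : Continuous fun z : ℂ => Complex.exp (-Complex.I * z)).continuousOn]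
    rintro ⟨z, hz, heq⟩
    obtain ⟨r, rfl, hr, hr0⟩ := hs z hz
    first
      | exact (exp_neg_I_mul_ne hr.1 hr.2 hr0).1 heq
      | exact (exp_neg_I_mul_ne hr.1 hr.2 hr0).2 heq

/-- Recovery of the Hamiltonian: `Ham (exp (-i H)) = H` for gapped selfadjoint `H`. -/
lemma ham_exp {H : Matrix (Fin n) (Fin n) ℂ} (hH : _root_.IsSelfAdjoint H)
    (hs : GapSpec H) : Ham (NormedSpace.exp ((-Complex.I) • H)) = H := by
  have ha : IsStarNormal H := hH.isStarNormal
  have hf : ContinuousOn (fun z : ℂ => Complex.exp (-Complex.I * z)) (spectrum ℂ H) :=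
    (by fun_prop : Continuous fun z : ℂ => Complex.exp (-Complex.I * z)).continuousOn
  have hg : ContinuousOn (fun z : ℂ => Complex.I * Complex.log z)
      ((fun z : ℂ => Complex.exp (-Complex.I * z)) '' spectrum ℂ H) := by
    rintro w ⟨z, hz, rfl⟩
    obtain ⟨r, rfl, hr, hr0⟩ := hs z hz
    refine (continuousAt_const.mul (_root_.continuousAt_clog ?_)).continuousWithinAt
    refine circle_slitPlane ?_ (exp_neg_I_mul_ne hr.1 hr.2 hr0).2
    rw [Complex.norm_exp]
    simp
  rw [exp_smul_eq_cfc _ H ha, Ham, ← cfc_comp _ _ H ha hg hf]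
  have heq : Set.EqOn ((fun z : ℂ => Complex.I * Complex.log z)
      ∘ fun z : ℂ => Complex.exp (-Complex.I * z)) id (spectrum ℂ H) := by
    intro z hz
    obtain ⟨r, rfl, hr, hr0⟩ := hs _ hz
    show Complex.I * Complex.log (Complex.exp (-Complex.I * (r : ℂ))) = (r : ℂ)
    have him : (-Complex.I * (r : ℂ)).im = -r := by simp
    rw [Complex.log_exp (by rw [him]; linarith [hr.2]) (by rw [him]; linarith [hr.1])]
    rw [← mul_assoc, mul_neg, Complex.I_mul_I, neg_neg, one_mul]
  rw [cfc_congr heq]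
  exact cfc_id ℂ H ha


/-- Continuity of `Ham` along a continuous family of gapped unitaries. -/
lemma continuous_ham {Y : Type*} [TopologicalSpace Y] {F : Y → Matrix (Fin n) (Fin n) ℂ}
    (hF : Continuous F) (hFu : ∀ y, GappedU (F y)) :
    Continuous fun y => Ham (F y) := by
  rw [continuous_iff_continuousAt]
  intro y₀
  -- pick radii around ±1 avoided by the spectrum of `F y₀`
  have hcl := spectrum.isClosed (𝕜 := ℂ) (F y₀)
  have h1 : (1 : ℂ) ∈ (spectrum ℂ (F y₀))ᶜ := (hFu y₀).2.1
  have h2 : (-1 : ℂ) ∈ (spectrum ℂ (F y₀))ᶜ := (hFu y₀).2.2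
  obtain ⟨ε₁, hε₁, hb1⟩ := Metric.isOpen_iff.mp hcl.isOpen_compl 1 h1
  obtain ⟨ε₂, hε₂, hb2⟩ := Metric.isOpen_iff.mp hcl.isOpen_compl (-1) h2
  set K : Set ℂ := Metric.closedBall (1 : ℂ) (ε₁/2) ∪ Metric.closedBall (-1 : ℂ) (ε₂/2) with hK
  have hKc : IsCompact K := (isCompact_closedBall _ _).union (isCompact_closedBall _ _)
  have hKavoid : ∀ z ∈ K, z ∉ spectrum ℂ (F y₀) := by
    rintro z (hz | hz)
    · exact hb1 (Metric.closedBall_subset_ball (by linarith) hz)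
    · exact hb2 (Metric.closedBall_subset_ball (by linarith) hz)
  -- the closed subset of the circle on which the log is nice
  set C : Set ℂ := Metric.sphere (0:ℂ) 1 \ (Metric.ball (1:ℂ) (ε₁/2) ∪ Metric.ball (-1:ℂ) (ε₂/2))
    with hC
  have hCc : IsClosed C := Metric.isClosed_sphere.sdiff (Metric.isOpen_ball.union Metric.isOpen_ball)
  have hCcont : ContinuousOn (fun z : ℂ => Complex.I * Complex.log z) C := by
    intro z hz
    obtain ⟨hzs, hzb⟩ := hz
    have habs : ‖z‖ = 1 := by
      simpa using mem_sphere_zero_iff_norm.mp hzs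
    have hz2 : z ≠ -1 := by
      intro h
      exact hzb (Or.inr (by rw [h]; exact Metric.mem_ball_self (by linarith)))
    exact (continuousAt_const.mul
      (_root_.continuousAt_clog (circle_slitPlane habs hz2))).continuousWithinAt
  obtain ⟨g, hgr⟩ := ContinuousMap.exists_restrict_eq (Y := ℂ) hCc
    ⟨C.restrict (fun z : ℂ => Complex.I * Complex.log z),
      continuousOn_iff_continuous_restrict.mp hCcont⟩
  have hgc : Continuous fun y => cfc (⇑g) (F y) :=
    continuous_cfc_of_unitary hF (fun y => (hFu y).1) _ g.continuous
  have hev : ∀ᶠ y in nhds y₀, ∀ z ∈ K, z ∉ spectrum ℂ (F y) :=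
    (hF.tendsto y₀).eventually (eventually_spectrum_disjoint hKc (F y₀) hKavoid)
  refine (hgc.continuousAt (x := y₀)).congr ?_
  filter_upwards [hev] with y hy
  refine (cfc_congr fun z hz => ?_).symm
  have hzs := spec_subset_sphere (hFu y).1 hz
  have hzC : z ∈ C := by
    refine ⟨hzs, fun hmem => hy z ?_ hz⟩
    rcases hmem with hm | hm
    · exact Or.inl (Metric.ball_subset_closedBall hm)
    · exact Or.inr (Metric.ball_subset_closedBall hm)
  have := congrArg (fun f : C(C, ℂ) => f ⟨z, hzC⟩) hgr
  simpa [Set.restrict, Set.domRestrict] using this.symm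


section HomotopyLayer

variable {X : Type*} [TopologicalSpace X]

lemma projIcc01_zero : Set.projIcc (0:ℝ) 1 zero_le_one 0 = 0 := by simp

lemma projIcc01_one : Set.projIcc (0:ℝ) 1 zero_le_one 1 = 1 := by simp

lemma projIcc01_coe (t : unitInterval) : Set.projIcc (0:ℝ) 1 zero_le_one (t : ℝ) = t :=
  Set.projIcc_val zero_le_one t

lemma coe_projIcc01 {r : ℝ} (h0 : 0 ≤ r) (h1 : r ≤ 1) :
    ((Set.projIcc (0:ℝ) 1 zero_le_one r : unitInterval) : ℝ) = r := by
  rw [Set.projIcc_of_mem _ ⟨h0, h1⟩]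

lemma homotopicThrough_symm {Y α : Type*} [TopologicalSpace Y] [TopologicalSpace α]
    {Q : (Y → α) → Prop} {f g : Y → α} (h : HomotopicThrough Q f g) :
    HomotopicThrough Q g f := by
  obtain ⟨h, hc, hQ, h0, h1⟩ := h
  refine ⟨fun p => h (unitInterval.symm p.1, p.2),
    hc.comp ((unitInterval.continuous_symm.comp continuous_fst).prodMk continuous_snd),
    fun s => hQ (unitInterval.symm s), fun y => ?_, fun y => ?_⟩
  · show h (unitInterval.symm 0, y) = g y
    rw [unitInterval.symm_zero]; exact h1 y
  · show h (unitInterval.symm 1, y) = f y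
    rw [unitInterval.symm_one]; exact h0 y

lemma homotopicThrough_trans {Y α : Type*} [TopologicalSpace Y] [TopologicalSpace α]
    {Q : (Y → α) → Prop} {f g k : Y → α}
    (h₁ : HomotopicThrough Q f g) (h₂ : HomotopicThrough Q g k) :
    HomotopicThrough Q f k := by
  obtain ⟨a, ac, aQ, a0, a1⟩ := h₁
  obtain ⟨b, bc, bQ, b0, b1⟩ := h₂
  refine ⟨fun p => if ((p.1 : ℝ)) ≤ 1/2
      then a (Set.projIcc 0 1 zero_le_one (2 * (p.1 : ℝ)), p.2)
      else b (Set.projIcc 0 1 zero_le_one (2 * (p.1 : ℝ) - 1), p.2), ?_, ?_, ?_, ?_⟩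
  · apply Continuous.if_le
    · exact ac.comp (((continuous_projIcc).comp
        (continuous_const.mul (continuous_subtype_val.comp continuous_fst))).prodMk
        continuous_snd)
    · exact bc.comp (((continuous_projIcc).comp
        ((continuous_const.mul (continuous_subtype_val.comp continuous_fst)).sub
          continuous_const)).prodMk continuous_snd)
    · exact continuous_subtype_val.comp continuous_fst
    · exact continuous_const
    · intro p hp
      have h2 : 2 * ((p.1 : ℝ)) = 1 := by rw [hp]; ring
      rw [h2, (by ring : (1:ℝ) - 1 = 0), projIcc01_one, projIcc01_zero, a1, b0]
  · intro s
    by_cases hs : ((s : ℝ)) ≤ 1/2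
    · have : (fun y => if ((s : ℝ)) ≤ 1/2
          then a (Set.projIcc 0 1 zero_le_one (2 * (s : ℝ)), y)
          else b (Set.projIcc 0 1 zero_le_one (2 * (s : ℝ) - 1), y))
          = fun y => a (Set.projIcc 0 1 zero_le_one (2 * (s : ℝ)), y) := by
        funext y; rw [if_pos hs]
      rw [this]; exact aQ _
    · have : (fun y => if ((s : ℝ)) ≤ 1/2
          then a (Set.projIcc 0 1 zero_le_one (2 * (s : ℝ)), y)
          else b (Set.projIcc 0 1 zero_le_one (2 * (s : ℝ) - 1), y))
          = fun y => b (Set.projIcc 0 1 zero_le_one (2 * (s : ℝ) - 1), y) := by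
        funext y; rw [if_neg hs]
      rw [this]; exact bQ _
  · intro y
    show (if (((0 : unitInterval) : ℝ)) ≤ 1/2
        then a (Set.projIcc 0 1 zero_le_one (2 * ((0 : unitInterval) : ℝ)), y)
        else b (Set.projIcc 0 1 zero_le_one (2 * ((0 : unitInterval) : ℝ) - 1), y)) = f y
    have h0' : ((0 : unitInterval) : ℝ) = 0 := rfl
    rw [if_pos (by rw [h0']; norm_num), h0', (by ring : 2 * (0:ℝ) = 0), projIcc01_zero, a0]
  · intro y
    show (if (((1 : unitInterval) : ℝ)) ≤ 1/2
        then a (Set.projIcc 0 1 zero_le_one (2 * ((1 : unitInterval) : ℝ)), y)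
        else b (Set.projIcc 0 1 zero_le_one (2 * ((1 : unitInterval) : ℝ) - 1), y)) = k y
    have h1' : ((1 : unitInterval) : ℝ) = 1 := rfl
    rw [if_neg (by rw [h1']; norm_num), h1', (by ring : 2 * (1:ℝ) - 1 = 1), projIcc01_one, b1]

lemma constEvol_apply (H : X → Matrix (Fin n) (Fin n) ℂ) (p : X × unitInterval) :
    constEvol H p = NormedSpace.exp ((-(((p.2 : ℝ) : ℂ) * Complex.I)) • H p.1) := rfl

lemma constEvol_zero (H : X → Matrix (Fin n) (Fin n) ℂ) (x : X) :
    constEvol H (x, 0) = 1 := by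
  rw [constEvol_apply]
  norm_num [NormedSpace.exp_zero]

lemma constEvol_one (H : X → Matrix (Fin n) (Fin n) ℂ) (x : X) :
    constEvol H (x, 1) = NormedSpace.exp ((-Complex.I) • H x) := by
  rw [constEvol_apply]
  norm_num

lemma constEvol_continuous {H : X → Matrix (Fin n) (Fin n) ℂ} (hH : Continuous H) :
    Continuous (constEvol H) := by
  apply (NormedSpace.exp_continuous).comp
  exact Continuous.fun_smul (by fun_prop) (hH.comp continuous_fst)

lemma famSelfAdjoint {H : X → Matrix (Fin n) (Fin n) ℂ}
    (h : IsGappedHermitianFamily H) (x : X) : _root_.IsSelfAdjoint (H x) := by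
  have := (h.2 x).1
  rwa [Matrix.IsHermitian, ← Matrix.star_eq_conjTranspose, ← isSelfAdjoint_iff] at this

lemma famGapSpec {H : X → Matrix (Fin n) (Fin n) ℂ}
    (h : IsGappedHermitianFamily H) (x : X) : GapSpec (H x) := (h.2 x).2

lemma star_coeI (t : ℝ) : star (-((t : ℂ) * Complex.I)) = -(-((t : ℂ) * Complex.I)) := by
  simp [Complex.star_def, _root_.map_mul, Complex.conj_ofReal, Complex.conj_I]

lemma constEvol_mem_unitary {H : X → Matrix (Fin n) (Fin n) ℂ}
    (hsa : ∀ x, _root_.IsSelfAdjoint (H x)) (p : X × unitInterval) :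
    constEvol H p ∈ Matrix.unitaryGroup (Fin n) ℂ := by
  rw [constEvol_apply]
  exact exp_smul_mem_unitary (hsa p.1) _ (star_coeI _)

lemma gappedU_constEvol_one {H : X → Matrix (Fin n) (Fin n) ℂ}
    (h : IsGappedHermitianFamily H) (x : X) : GappedU (constEvol H (x, 1)) := by
  rw [constEvol_one]
  exact gappedU_exp (famSelfAdjoint h x) (famGapSpec h x)

lemma ham_constEvol_one {H : X → Matrix (Fin n) (Fin n) ℂ}
    (h : IsGappedHermitianFamily H) (x : X) : Ham (constEvol H (x, 1)) = H x := by
  rw [constEvol_one]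
  exact ham_exp (famSelfAdjoint h x) (famGapSpec h x)

lemma compEvol_apply_zero (U V : X × unitInterval → Matrix (Fin n) (Fin n) ℂ) (x : X) :
    compEvol U V (x, 0) = U (x, 0) := by
  show (if ((0 : unitInterval) : ℝ) ≤ 1/2 then _ else _) = _
  rw [if_pos (by norm_num [show ((0 : unitInterval) : ℝ) = 0 from rfl])]
  norm_num [show ((0 : unitInterval) : ℝ) = 0 from rfl, projIcc01_zero]

lemma compEvol_apply_one (U V : X × unitInterval → Matrix (Fin n) (Fin n) ℂ) (x : X) :
    compEvol U V (x, 1) = V (x, 1) * U (x, 1) := by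
  show (if ((1 : unitInterval) : ℝ) ≤ 1/2 then _ else _) = _
  rw [if_neg (by norm_num [show ((1 : unitInterval) : ℝ) = 1 from rfl])]
  norm_num [show ((1 : unitInterval) : ℝ) = 1 from rfl, projIcc01_one]

end HomotopyLayer

section Constructions

variable {X : Type*} [TopologicalSpace X]

lemma star_coeI' (t : ℝ) : star ((t : ℂ) * Complex.I) = -((t : ℂ) * Complex.I) := by
  simp [Complex.star_def, _root_.map_mul, Complex.conj_ofReal, Complex.conj_I]

lemma mul_exp_I_smul_ham (hu : GappedU u) :
    u * NormedSpace.exp (Complex.I • Ham u) = 1 := by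
  have h1 := exp_I_smul_ham_mul hu
  have h2 : u * star u = 1 := Matrix.mem_unitaryGroup_iff.mp hu.1
  have he : NormedSpace.exp (Complex.I • Ham u) = star u := by
    calc NormedSpace.exp (Complex.I • Ham u)
        = NormedSpace.exp (Complex.I • Ham u) * (u * star u) := by rw [h2, mul_one]
      _ = (NormedSpace.exp (Complex.I • Ham u) * u) * star u := by rw [mul_assoc]
      _ = star u := by rw [h1, one_mul]
  rw [he, h2]

lemma compEvol_eval_le {U V : X × unitInterval → Matrix (Fin n) (Fin n) ℂ} {x : X}
    {t : unitInterval} (ht : (t : ℝ) ≤ 1/2) :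
    compEvol U V (x, t) = U (x, Set.projIcc 0 1 zero_le_one (2 * (t : ℝ))) := by
  show (if ((t : ℝ)) ≤ 1/2 then _ else _) = _
  rw [if_pos ht]

lemma compEvol_eval_gt {U V : X × unitInterval → Matrix (Fin n) (Fin n) ℂ} {x : X}
    {t : unitInterval} (ht : ¬ (t : ℝ) ≤ 1/2) :
    compEvol U V (x, t)
      = V (x, Set.projIcc 0 1 zero_le_one (2 * (t : ℝ) - 1)) * U (x, 1) := by
  show (if ((t : ℝ)) ≤ 1/2 then _ else _) = _
  rw [if_neg ht]

lemma isGapped_compEvol {L C : X × unitInterval → Matrix (Fin n) (Fin n) ℂ}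
    (hL : IsUnitaryLoop L) (hC : IsGappedConstantEvolution C) :
    IsGappedEvolution (compEvol L C) := by
  obtain ⟨⟨hLc, hLu, hL0⟩, hL1⟩ := hL
  obtain ⟨H, hH, rfl⟩ := hC
  have hCc : Continuous (constEvol H) := constEvol_continuous hH.1
  have hCu : ∀ p, constEvol H p ∈ Matrix.unitaryGroup (Fin n) ℂ :=
    constEvol_mem_unitary (famSelfAdjoint hH)
  refine ⟨⟨?_, ?_, ?_⟩, ?_⟩
  · show Continuous fun p : X × unitInterval => if ((p.2 : ℝ)) ≤ 1/2
      then L (p.1, Set.projIcc 0 1 zero_le_one (2 * (p.2 : ℝ)))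
      else constEvol H (p.1, Set.projIcc 0 1 zero_le_one (2 * (p.2 : ℝ) - 1)) * L (p.1, 1)
    apply Continuous.if_le
    · exact hLc.comp (continuous_fst.prodMk ((continuous_projIcc).comp
        (continuous_const.mul (continuous_subtype_val.comp continuous_snd))))
    · exact (hCc.comp (continuous_fst.prodMk ((continuous_projIcc).comp
        ((continuous_const.mul (continuous_subtype_val.comp continuous_snd)).sub
          continuous_const)))).mul (hLc.comp (continuous_fst.prodMk continuous_const))
    · exact continuous_subtype_val.comp continuous_snd
    · exact continuous_const
    · intro p hp
      have h2 : 2 * ((p.2 : ℝ)) = 1 := by rw [hp]; ring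
      rw [h2, (by ring : (1:ℝ) - 1 = 0), projIcc01_one, projIcc01_zero, constEvol_zero, one_mul]
  · intro p
    show (if ((p.2 : ℝ)) ≤ 1/2 then _ else _) ∈ _
    by_cases hp : ((p.2 : ℝ)) ≤ 1/2
    · rw [if_pos hp]; exact hLu _
    · rw [if_neg hp]; exact mul_mem (hCu _) (hLu _)
  · intro x
    rw [compEvol_apply_zero]; exact hL0 x
  · intro x
    rw [compEvol_apply_one, hL1 x, mul_one]
    exact ⟨(gappedU_constEvol_one hH x).2.1, (gappedU_constEvol_one hH x).2.2⟩

/-- Stage A: a loop `L` is loop-homotopic to `(L * C) ⋅ exp(itH)`. -/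
lemma loop_mul_exp_homotopic {L : X × unitInterval → Matrix (Fin n) (Fin n) ℂ}
    {H : X → Matrix (Fin n) (Fin n) ℂ} (hL : IsUnitaryLoop L)
    (hH : IsGappedHermitianFamily H) :
    HomotopicThrough IsUnitaryLoop L
      (fun y => compEvol L (constEvol H) y *
        NormedSpace.exp ((((y.2 : ℝ) : ℂ) * Complex.I) • H y.1)) := by
  obtain ⟨⟨hLc, hLu, hL0⟩, hL1⟩ := hL
  have hHc := hH.1
  have hcont : Continuous fun p : unitInterval × (X × unitInterval) =>
      L (p.2.1, Set.projIcc 0 1 zero_le_one (min ((1 + (p.1 : ℝ)) * (p.2.2 : ℝ)) 1)) *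
      NormedSpace.exp (((((p.1 : ℝ) * min (p.2.2 : ℝ) (1 - (p.2.2 : ℝ)) : ℝ) : ℂ)
        * Complex.I) • H p.2.1) := by
    apply Continuous.mul
    · apply hLc.comp
      apply Continuous.prodMk (continuous_fst.comp continuous_snd)
      apply continuous_projIcc.comp
      apply Continuous.min _ continuous_const
      exact (continuous_const.add (continuous_subtype_val.comp continuous_fst)).mul
        (continuous_subtype_val.comp (continuous_snd.comp continuous_snd))
    · apply (NormedSpace.exp_continuous).comp
      apply Continuous.fun_smul _ (hHc.comp (continuous_fst.comp continuous_snd))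
      apply Continuous.mul _ continuous_const
      apply Complex.continuous_ofReal.comp
      apply Continuous.mul (continuous_subtype_val.comp continuous_fst)
      apply Continuous.min (continuous_subtype_val.comp (continuous_snd.comp continuous_snd))
      exact continuous_const.sub (continuous_subtype_val.comp (continuous_snd.comp continuous_snd))
  refine ⟨_, hcont, ?_, ?_, ?_⟩
  · intro s
    refine ⟨⟨hcont.comp (continuous_const.prodMk continuous_id), ?_, ?_⟩, ?_⟩
    · intro p
      exact mul_mem (hLu _) (exp_smul_mem_unitary (famSelfAdjoint hH _) _ (star_coeI' _))
    · intro x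
      show L (x, Set.projIcc 0 1 zero_le_one (min ((1 + (s : ℝ)) * ((0 : unitInterval) : ℝ)) 1))
          * _ = 1
      have e0 : ((0 : unitInterval) : ℝ) = 0 := rfl
      rw [e0, (by rw [mul_zero]; exact min_eq_left zero_le_one :
        min ((1 + (s : ℝ)) * 0) 1 = 0), projIcc01_zero, hL0 x]
      norm_num [NormedSpace.exp_zero]
    · intro x
      show L (x, Set.projIcc 0 1 zero_le_one (min ((1 + (s : ℝ)) * ((1 : unitInterval) : ℝ)) 1))
          * _ = 1
      have e1 : ((1 : unitInterval) : ℝ) = 1 := rfl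
      rw [e1, (by rw [mul_one]; exact min_eq_right (by linarith [s.2.1]) :
        min ((1 + (s : ℝ)) * 1) 1 = 1), projIcc01_one, hL1 x]
      norm_num [NormedSpace.exp_zero]
  · intro y
    show L (y.1, Set.projIcc 0 1 zero_le_one
        (min ((1 + ((0 : unitInterval) : ℝ)) * (y.2 : ℝ)) 1)) * _ = L y
    have e0 : ((0 : unitInterval) : ℝ) = 0 := rfl
    rw [e0, (by rw [add_zero, one_mul]; exact min_eq_left y.2.2.2 :
      min ((1 + (0:ℝ)) * (y.2 : ℝ)) 1 = (y.2 : ℝ)), projIcc01_coe]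
    norm_num [NormedSpace.exp_zero]
  · intro y
    obtain ⟨x, t⟩ := y
    show L (x, Set.projIcc 0 1 zero_le_one
        (min ((1 + ((1 : unitInterval) : ℝ)) * (t : ℝ)) 1)) *
        NormedSpace.exp ((((((1 : unitInterval) : ℝ) * min (t : ℝ) (1 - (t : ℝ)) : ℝ) : ℂ)
          * Complex.I) • H x)
      = compEvol L (constEvol H) (x, t) *
        NormedSpace.exp ((((t : ℝ) : ℂ) * Complex.I) • H x)
    have e1 : ((1 : unitInterval) : ℝ) = 1 := rfl
    rw [e1]
    by_cases ht : (t : ℝ) ≤ 1/2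
    · rw [compEvol_eval_le ht,
        (by rw [min_eq_left (by linarith [t.2.1])]; ring :
          min ((1 + (1:ℝ)) * (t : ℝ)) 1 = 2 * (t : ℝ)),
        (by rw [min_eq_left (by linarith)] :
          (1 : ℝ) * min (t : ℝ) (1 - (t : ℝ)) = 1 * (t : ℝ)), one_mul]
    · have ht' := not_le.mp ht
      rw [compEvol_eval_gt ht, hL1 x, mul_one,
        (by exact min_eq_right (by linarith) : min ((1 + (1:ℝ)) * (t : ℝ)) 1 = 1),
        projIcc01_one, hL1 x, one_mul,
        (by rw [min_eq_right (by linarith)] :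
          (1 : ℝ) * min (t : ℝ) (1 - (t : ℝ)) = 1 * (1 - (t : ℝ))), one_mul,
        constEvol_apply]
      have hmem : ((Set.projIcc (0:ℝ) 1 zero_le_one (2 * (t : ℝ) - 1) : unitInterval) : ℝ)
          = 2 * (t : ℝ) - 1 := coe_projIcc01 (by linarith) (by linarith [t.2.2])
      rw [hmem, exp_smul_mul_exp_smul]
      congr 1
      push_cast
      ring

end Constructions

section MainLemmas

variable {X : Type*} [TopologicalSpace X]

lemma reverse_dir {L₁ L₂ C₁ C₂ : X × unitInterval → Matrix (Fin n) (Fin n) ℂ}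
    (h1 : HomotopicThrough IsUnitaryLoop L₁ L₂)
    (h2 : HomotopicThrough IsGappedConstantEvolution C₁ C₂) :
    HomotopicThrough IsGappedEvolution (compEvol L₁ C₁) (compEvol L₂ C₂) := by
  obtain ⟨a, ac, aQ, a0, a1⟩ := h1
  obtain ⟨b, bc, bQ, b0, b1⟩ := h2
  refine ⟨fun p => compEvol (fun y => a (p.1, y)) (fun y => b (p.1, y)) p.2, ?_, ?_, ?_, ?_⟩
  · show Continuous fun p : unitInterval × (X × unitInterval) =>
      if ((p.2.2 : ℝ)) ≤ 1/2
      then a (p.1, (p.2.1, Set.projIcc 0 1 zero_le_one (2 * (p.2.2 : ℝ))))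
      else b (p.1, (p.2.1, Set.projIcc 0 1 zero_le_one (2 * (p.2.2 : ℝ) - 1)))
        * a (p.1, (p.2.1, 1))
    apply Continuous.if_le
    · exact ac.comp (continuous_fst.prodMk ((continuous_fst.comp continuous_snd).prodMk
        ((continuous_projIcc).comp (continuous_const.mul
          (continuous_subtype_val.comp (continuous_snd.comp continuous_snd))))))
    · exact (bc.comp (continuous_fst.prodMk ((continuous_fst.comp continuous_snd).prodMk
        ((continuous_projIcc).comp ((continuous_const.mul
          (continuous_subtype_val.comp (continuous_snd.comp continuous_snd))).sub
          continuous_const))))).mul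
        (ac.comp (continuous_fst.prodMk ((continuous_fst.comp continuous_snd).prodMk
          continuous_const)))
    · exact continuous_subtype_val.comp (continuous_snd.comp continuous_snd)
    · exact continuous_const
    · intro p hp
      have h2' : 2 * ((p.2.2 : ℝ)) = 1 := by rw [hp]; ring
      rw [h2', (by ring : (1:ℝ) - 1 = 0), projIcc01_one, projIcc01_zero]
      obtain ⟨Hs, hHs, hbs⟩ := bQ p.1
      have hb0 : b (p.1, (p.2.1, 0)) = 1 := by
        rw [show b (p.1, (p.2.1, 0)) = constEvol Hs (p.2.1, 0) from congrFun hbs (p.2.1, 0)]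
        exact constEvol_zero Hs p.2.1
      rw [hb0, one_mul]
  · intro s
    exact isGapped_compEvol (aQ s) (bQ s)
  · intro y
    show compEvol (fun y' => a (0, y')) (fun y' => b (0, y')) y = compEvol L₁ C₁ y
    rw [show (fun y' => a (0, y')) = L₁ from funext a0,
      show (fun y' => b (0, y')) = C₁ from funext b0]
  · intro y
    show compEvol (fun y' => a (1, y')) (fun y' => b (1, y')) y = compEvol L₂ C₂ y
    rw [show (fun y' => a (1, y')) = L₂ from funext a1,
      show (fun y' => b (1, y')) = C₂ from funext b1]

lemma forward_dir {L₁ L₂ : X × unitInterval → Matrix (Fin n) (Fin n) ℂ}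
    {H₁ H₂ : X → Matrix (Fin n) (Fin n) ℂ}
    (hL₁ : IsUnitaryLoop L₁) (hL₂ : IsUnitaryLoop L₂)
    (hH₁ : IsGappedHermitianFamily H₁) (hH₂ : IsGappedHermitianFamily H₂)
    (hh : HomotopicThrough IsGappedEvolution (compEvol L₁ (constEvol H₁))
      (compEvol L₂ (constEvol H₂))) :
    HomotopicThrough IsUnitaryLoop L₁ L₂ ∧
      HomotopicThrough IsGappedConstantEvolution (constEvol H₁) (constEvol H₂) := by
  obtain ⟨h, hc, hQ, h0, h1⟩ := hh
  have hGU : ∀ s x, GappedU (h (s, (x, 1))) := fun s x =>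
    ⟨((hQ s).1).2.1 (x, 1), ((hQ s).2 x).1, ((hQ s).2 x).2⟩
  set K : unitInterval × X → Matrix (Fin n) (Fin n) ℂ :=
    fun q => Ham (h (q.1, (q.2, 1))) with hKdef
  have hKc : Continuous K := continuous_ham (hc.comp (continuous_fst.prodMk
    (continuous_snd.prodMk continuous_const))) (fun q => hGU q.1 q.2)
  have hKsa : ∀ s x, _root_.IsSelfAdjoint (K (s, x)) := fun s x => ham_isSelfAdjoint (hGU s x)
  have hKherm : ∀ s x, (K (s, x)).IsHermitian := fun s x => ham_isHermitian (hGU s x)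
  have hKgap : ∀ s x, GapSpec (K (s, x)) := fun s x w hw => ham_spectrum (hGU s x) hw
  have hK0 : ∀ x, K (0, x) = H₁ x := by
    intro x
    show Ham (h (0, (x, 1))) = H₁ x
    rw [h0 (x, 1), compEvol_apply_one, hL₁.2 x, mul_one]
    exact ham_constEvol_one hH₁ x
  have hK1 : ∀ x, K (1, x) = H₂ x := by
    intro x
    show Ham (h (1, (x, 1))) = H₂ x
    rw [h1 (x, 1), compEvol_apply_one, hL₂.2 x, mul_one]
    exact ham_constEvol_one hH₂ x
  constructor
  · -- loop part
    set W : unitInterval × (X × unitInterval) → Matrix (Fin n) (Fin n) ℂ := fun p =>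
      h (p.1, p.2) * NormedSpace.exp ((((p.2.2 : ℝ) : ℂ) * Complex.I) • K (p.1, p.2.1))
      with hWdef
    have hWcont : Continuous W := by
      apply hc.mul
      apply (NormedSpace.exp_continuous).comp
      apply Continuous.fun_smul _ (hKc.comp (continuous_fst.prodMk
        (continuous_fst.comp continuous_snd)))
      exact (Complex.continuous_ofReal.comp
        (continuous_subtype_val.comp (continuous_snd.comp continuous_snd))).mul
        continuous_const
    have hWloop : ∀ s, IsUnitaryLoop fun y => W (s, y) := by
      intro s
      refine ⟨⟨hWcont.comp (continuous_const.prodMk continuous_id), ?_, ?_⟩, ?_⟩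
      · intro p
        exact mul_mem (((hQ s).1).2.1 p)
          (exp_smul_mem_unitary (hKsa s p.1) _ (star_coeI' _))
      · intro x
        show h (s, (x, 0)) * NormedSpace.exp
          (((((0 : unitInterval) : ℝ) : ℂ) * Complex.I) • K (s, x)) = 1
        have hz : h (s, (x, 0)) = 1 := ((hQ s).1).2.2 x
        rw [hz, show ((0 : unitInterval) : ℝ) = 0 from rfl]
        norm_num [NormedSpace.exp_zero]
      · intro x
        show h (s, (x, 1)) * NormedSpace.exp
          (((((1 : unitInterval) : ℝ) : ℂ) * Complex.I) • K (s, x)) = 1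
        rw [show (((((1 : unitInterval) : ℝ)) : ℂ) * Complex.I) = Complex.I by norm_num]
        exact mul_exp_I_smul_ham (hGU s x)
    have hA1 : HomotopicThrough IsUnitaryLoop L₁ (fun y => W (0, y)) := by
      have hWeq : (fun y => W (0, y)) = fun y => compEvol L₁ (constEvol H₁) y *
          NormedSpace.exp ((((y.2 : ℝ) : ℂ) * Complex.I) • H₁ y.1) := by
        funext y
        show h (0, y) * _ = _
        rw [h0 y, hK0 y.1]
      rw [hWeq]
      exact loop_mul_exp_homotopic hL₁ hH₁
    have hA2 : HomotopicThrough IsUnitaryLoop L₂ (fun y => W (1, y)) := by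
      have hWeq : (fun y => W (1, y)) = fun y => compEvol L₂ (constEvol H₂) y *
          NormedSpace.exp ((((y.2 : ℝ) : ℂ) * Complex.I) • H₂ y.1) := by
        funext y
        show h (1, y) * _ = _
        rw [h1 y, hK1 y.1]
      rw [hWeq]
      exact loop_mul_exp_homotopic hL₂ hH₂
    have hB : HomotopicThrough IsUnitaryLoop (fun y => W (0, y)) (fun y => W (1, y)) :=
      ⟨W, hWcont, hWloop, fun y => rfl, fun y => rfl⟩
    exact homotopicThrough_trans (homotopicThrough_trans hA1 hB) (homotopicThrough_symm hA2)
  · -- constant part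
    refine ⟨fun p => constEvol (fun x => K (p.1, x)) p.2, ?_, ?_, ?_, ?_⟩
    · show Continuous fun p : unitInterval × (X × unitInterval) =>
        NormedSpace.exp ((-(((p.2.2 : ℝ) : ℂ) * Complex.I)) • K (p.1, p.2.1))
      apply (NormedSpace.exp_continuous).comp
      apply Continuous.fun_smul _ (hKc.comp (continuous_fst.prodMk
        (continuous_fst.comp continuous_snd)))
      exact ((Complex.continuous_ofReal.comp
        (continuous_subtype_val.comp (continuous_snd.comp continuous_snd))).mul
        continuous_const).neg
    · intro s
      exact ⟨fun x => K (s, x), ⟨hKc.comp (continuous_const.prodMk continuous_id),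
        fun x => ⟨hKherm s x, hKgap s x⟩⟩, rfl⟩
    · intro y
      show constEvol (fun x => K (0, x)) y = constEvol H₁ y
      rw [show (fun x => K (0, x)) = H₁ from funext hK0]
    · intro y
      show constEvol (fun x => K (1, x)) y = constEvol H₂ y
      rw [show (fun x => K (1, x)) = H₂ from funext hK1]

end MainLemmas

end FloquetAux

/-- `L₁*C₁` and `L₂*C₂` are homotopic through gapped unitary evolutions iff
`L₁ ≈ L₂` through unitary loops and `C₁ ≈ C₂` through gapped constant evolutions. -/
theorem loop_comp_const_homotopic_iff
    {X : Type*} [TopologicalSpace X] {n : ℕ} (hn : 1 ≤ n)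
    (L₁ L₂ C₁ C₂ : X × unitInterval → Matrix (Fin n) (Fin n) ℂ)
    (hL₁ : IsUnitaryLoop L₁) (hL₂ : IsUnitaryLoop L₂)
    (hC₁ : IsGappedConstantEvolution C₁) (hC₂ : IsGappedConstantEvolution C₂) :
    HomotopicThrough IsGappedEvolution (compEvol L₁ C₁) (compEvol L₂ C₂) ↔
      HomotopicThrough IsUnitaryLoop L₁ L₂ ∧
      HomotopicThrough IsGappedConstantEvolution C₁ C₂ := by
  obtain ⟨H₁, hH₁, rfl⟩ := hC₁
  obtain ⟨H₂, hH₂, rfl⟩ := hC₂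
  constructor
  · intro h
    exact FloquetAux.forward_dir hL₁ hL₂ hH₁ hH₂ h
  · rintro ⟨h1, h2⟩
    exact FloquetAux.reverse_dir h1 h2
end

section
/- The Floquet-Hamiltonian map is continuous: on the set S of n×n complex unitary matrices V for which -1 is not an eigenvalue, the map sending V to the unique Hermitian matrix H with all eigenvalues in the open interval (-π,π) satisfying exp(-i·H) = V is a continuous function from S (with the subspace topology of Matrix n n ℂ) to Matrix n n ℂ. -/
open Matrix

section FloquetAux

open Complex
open scoped Matrix.Norms.L2Operator

@[reducible] noncomputable def matCStar (n : ℕ) : CStarAlgebra (Matrix (Fin n) (Fin n) ℂ) := inferInstance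

attribute [local instance] matCStar

variable {n : ℕ}

lemma floquet_expA (H : Matrix (Fin n) (Fin n) ℂ) (h : IsSelfAdjoint H) :
    NormedSpace.exp ((-Complex.I) • H) = cfc (fun z : ℂ => Complex.exp (-Complex.I * z)) H := by
  have h1 : (-Complex.I) • H = cfc (fun z : ℂ => -Complex.I * z) H := by
    rw [cfc_const_mul_id (-Complex.I) H h.isStarNormal]
  have h2 : IsStarNormal ((-Complex.I) • H) := by
    rw [h1]; exact cfc_predicate _ H
  rw [← CFC.complex_exp_eq_normedSpace_exp (p := IsStarNormal) h2]
  conv_lhs => rw [h1]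
  rw [← cfc_comp Complex.exp (fun z : ℂ => -Complex.I * z) H h.isStarNormal]
  rfl

lemma floquet_recover (H : Matrix (Fin n) (Fin n) ℂ) (h : IsSelfAdjoint H)
    (hs : ∀ z ∈ spectrum ℂ H, ∃ r : ℝ, z = (r : ℂ) ∧ r ∈ Set.Ioo (-Real.pi) Real.pi) :
    cfc (fun z : ℂ => Complex.I * Complex.log z) (NormedSpace.exp ((-Complex.I) • H)) = H := by
  rw [floquet_expA H h]
  rw [← cfc_comp' (fun z : ℂ => Complex.I * Complex.log z)
      (fun z : ℂ => Complex.exp (-Complex.I * z)) H ?cont ?ha h.isStarNormal]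
  case ha => fun_prop
  case cont =>
    apply ContinuousOn.mul continuousOn_const
    intro z hz
    obtain ⟨w, hw, rfl⟩ := hz
    obtain ⟨r, rfl, hr⟩ := hs w hw
    apply (continuousAt_clog ?_).continuousWithinAt
    rw [Complex.mem_slitPlane_iff]
    have : -Complex.I * (r : ℂ) = ((-r : ℝ) : ℂ) * Complex.I := by push_cast; ring
    simp only []
    rw [this, Complex.exp_ofReal_mul_I_re, Complex.exp_ofReal_mul_I_im]
    rcases eq_or_ne r 0 with h0 | h0
    · left; simp [h0]
    · right
      intro hsin
      have hs0 : Real.sin (-r) = 0 := by exact_mod_cast hsin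
      have := (Real.sin_eq_zero_iff_of_lt_of_lt (by linarith [hr.2]) (by linarith [hr.1])).mp hs0
      exact h0 (by linarith)
  · calc cfc ((fun z : ℂ => Complex.I * Complex.log z) ∘ fun z : ℂ => Complex.exp (-Complex.I * z)) H
        = cfc (id : ℂ → ℂ) H := by
          apply cfc_congr
          intro z hz
          obtain ⟨r, rfl, hr⟩ := hs z hz
          simp only [Function.comp_apply, id_eq]
          rw [Complex.log_exp (by simpa using hr.2) (by simp; nlinarith [hr.1, Real.pi_pos])]
          have : Complex.I * -Complex.I = 1 := by rw [mul_neg, Complex.I_mul_I]; ring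
          rw [← mul_assoc, this, one_mul]
      _ = H := cfc_id ℂ H h.isStarNormal

lemma floquet_specmapA (H : Matrix (Fin n) (Fin n) ℂ) (h : IsSelfAdjoint H) :
    spectrum ℂ (NormedSpace.exp ((-Complex.I) • H))
      = (fun z : ℂ => Complex.exp (-Complex.I * z)) '' spectrum ℂ H := by
  rw [floquet_expA H h]
  exact cfc_map_spectrum (fun z : ℂ => Complex.exp (-Complex.I * z)) H h.isStarNormal (by fun_prop)

lemma floquet_normbound (H : Matrix (Fin n) (Fin n) ℂ) (h : IsSelfAdjoint H)
    (hs : ∀ z ∈ spectrum ℂ H, ∃ r : ℝ, z = (r : ℂ) ∧ r ∈ Set.Ioo (-Real.pi) Real.pi) :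
    ‖H‖ ≤ Real.pi := by
  have h1 := h.spectralRadius_eq_nnnorm
  have h2 : spectralRadius ℂ H ≤ ENNReal.ofReal Real.pi := by
    rw [spectralRadius]
    refine iSup₂_le fun k hk => ?_
    obtain ⟨r, rfl, hrIoo⟩ := hs _ hk
    rw [← ENNReal.ofReal_coe_nnreal]
    apply ENNReal.ofReal_le_ofReal
    have : ‖(r:ℂ)‖₊ = ‖r‖₊ := by simp [nnnorm]
    rw [this]
    simpa [Real.norm_eq_abs, abs_le] using ⟨le_of_lt hrIoo.1, le_of_lt hrIoo.2⟩
  rw [h1] at h2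
  rw [ENNReal.ofReal] at h2
  have h3 : ‖H‖₊ ≤ Real.toNNReal Real.pi := ENNReal.coe_le_coe.mp h2
  calc ‖H‖ = (‖H‖₊ : ℝ) := rfl
    _ ≤ (Real.toNNReal Real.pi : ℝ) := NNReal.coe_le_coe.mpr h3
    _ = Real.pi := Real.coe_toNNReal _ Real.pi_pos.le

lemma floquet_main_aux {n : ℕ} (hn : 1 ≤ n)
    (F : Matrix (Fin n) (Fin n) ℂ → Matrix (Fin n) (Fin n) ℂ)
    (hF : ∀ V ∈ {V : Matrix (Fin n) (Fin n) ℂ |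
        V ∈ Matrix.unitaryGroup (Fin n) ℂ ∧ (-1 : ℂ) ∉ spectrum ℂ V},
      (F V).IsHermitian ∧
      (∀ z ∈ spectrum ℂ (F V), ∃ r : ℝ, z = (r : ℂ) ∧ r ∈ Set.Ioo (-Real.pi) Real.pi) ∧
      NormedSpace.exp ((-Complex.I) • F V) = V) :
    ContinuousOn F {V : Matrix (Fin n) (Fin n) ℂ |
      V ∈ Matrix.unitaryGroup (Fin n) ℂ ∧ (-1 : ℂ) ∉ spectrum ℂ V} := by
  haveI : NeZero n := ⟨by omega⟩
  set S := {V : Matrix (Fin n) (Fin n) ℂ |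
      V ∈ Matrix.unitaryGroup (Fin n) ℂ ∧ (-1 : ℂ) ∉ spectrum ℂ V} with hS
  intro V₀ hV₀
  rw [ContinuousWithinAt]
  apply Filter.tendsto_of_subseq_tendsto
  intro u hu
  have hu' : Filter.Tendsto u Filter.atTop (nhds V₀) ∧ ∀ᶠ k in Filter.atTop, u k ∈ S :=
    ⟨hu.mono_right nhdsWithin_le_nhds, tendsto_nhdsWithin_iff.mp hu |>.2⟩
  obtain ⟨N, hN⟩ := Filter.eventually_atTop.mp hu'.2
  set w : ℕ → Matrix (Fin n) (Fin n) ℂ := fun k => u (k + N) with hw_def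
  have hwS : ∀ k, w k ∈ S := fun k => hN _ (Nat.le_add_left N k)
  have hw : Filter.Tendsto w Filter.atTop (nhds V₀) :=
    hu'.1.comp (Filter.tendsto_add_atTop_nat N)
  -- hermitian etc for each k
  have hsa : ∀ k, IsSelfAdjoint (F (w k)) := fun k => (hF _ (hwS k)).1
  have hball : ∀ k, F (w k) ∈ Metric.closedBall (0 : Matrix (Fin n) (Fin n) ℂ) Real.pi := by
    intro k
    rw [Metric.mem_closedBall, dist_zero_right]
    exact floquet_normbound _ (hsa k) (hF _ (hwS k)).2.1
  have hcpt : IsCompact (Metric.closedBall (0 : Matrix (Fin n) (Fin n) ℂ) Real.pi) :=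
    isCompact_closedBall _ _
  obtain ⟨H₀, _, φ, hφ, hlim⟩ := hcpt.tendsto_subseq (x := fun k => F (w k)) hball
  -- the subsequence of V's converges to V₀
  have hwφ : Filter.Tendsto (fun k => w (φ k)) Filter.atTop (nhds V₀) :=
    hw.comp hφ.tendsto_atTop
  -- H₀ is selfadjoint
  have hH₀sa : IsSelfAdjoint H₀ := by
    have h1 : Filter.Tendsto (fun k => star (F (w (φ k)))) Filter.atTop (nhds (star H₀)) :=
      (continuous_star.tendsto H₀).comp hlim
    have h2 : (fun k => star (F (w (φ k)))) = fun k => F (w (φ k)) := by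
      funext k; exact hsa (φ k)
    rw [h2] at h1
    exact tendsto_nhds_unique h1 hlim
  -- exp (-I • H₀) = V₀
  have hexp₀ : NormedSpace.exp ((-Complex.I) • H₀) = V₀ := by
    have hc : Continuous fun M : Matrix (Fin n) (Fin n) ℂ =>
        NormedSpace.exp ((-Complex.I) • M) :=
      let +nondep : NormedAlgebra ℚ (Matrix (Fin n) (Fin n) ℂ) := .restrictScalars ℚ ℂ _
      NormedSpace.exp_continuous.comp (continuous_const_smul _)
    have h1 : Filter.Tendsto (fun k => NormedSpace.exp ((-Complex.I) • F (w (φ k))))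
        Filter.atTop (nhds (NormedSpace.exp ((-Complex.I) • H₀))) :=
      (hc.tendsto H₀).comp hlim
    have h2 : (fun k => NormedSpace.exp ((-Complex.I) • F (w (φ k)))) = fun k => w (φ k) := by
      funext k; exact (hF _ (hwS (φ k))).2.2
    rw [h2] at h1
    exact tendsto_nhds_unique h1 hwφ
  -- norm bound on H₀
  have hH₀norm : ‖H₀‖ ≤ Real.pi := by
    have h1 : Filter.Tendsto (fun k => ‖F (w (φ k))‖) Filter.atTop (nhds ‖H₀‖) :=
      (continuous_norm.tendsto H₀).comp hlim
    exact le_of_tendsto h1 (Filter.Eventually.of_forall fun k => by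
      simpa [Metric.mem_closedBall, dist_zero_right] using hball (φ k))
  -- spectrum of H₀ is real and in the open interval
  have hspec₀ : ∀ z ∈ spectrum ℂ H₀, ∃ r : ℝ, z = (r : ℂ) ∧ r ∈ Set.Ioo (-Real.pi) Real.pi := by
    intro z hz
    have hzre : z = (z.re : ℂ) := hH₀sa.mem_spectrum_eq_re hz
    refine ⟨z.re, hzre, ?_⟩
    have habs : |z.re| ≤ Real.pi := by
      have h1 : ‖z‖ ≤ ‖H₀‖ := spectrum.norm_le_norm_of_mem hz
      have h2 : ‖z‖ = |z.re| := by rw [hzre]; exact (Complex.norm_real _).trans (Real.norm_eq_abs _)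
      rw [h2] at h1
      linarith
    have hmem : ∀ hc : Complex.exp (-Complex.I * z) = -1, False := by
      intro hc
      apply hV₀.2
      rw [← hexp₀, floquet_specmapA H₀ hH₀sa]
      exact ⟨z, hz, hc⟩
    have hne1 : z.re ≠ Real.pi := by
      intro hcontra
      apply hmem
      rw [hzre, hcontra]
      rw [show -Complex.I * ((Real.pi : ℝ) : ℂ) = -((Real.pi : ℂ) * Complex.I) by ring,
        Complex.exp_neg, Complex.exp_pi_mul_I]
      norm_num
    have hne2 : z.re ≠ -Real.pi := by
      intro hcontra
      apply hmem
      rw [hzre, hcontra]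
      rw [show -Complex.I * (((-Real.pi : ℝ)) : ℂ) = (Real.pi : ℂ) * Complex.I by push_cast; ring,
        Complex.exp_pi_mul_I]
    have hlt : |z.re| < Real.pi := by
      rcases lt_or_eq_of_le habs with h | h
      · exact h
      · rcases abs_eq (le_of_lt Real.pi_pos) |>.mp h with h' | h'
        · exact absurd h' hne1
        · exact absurd h' hne2
      
    exact abs_lt.mp hlt
  -- conclude H₀ = F V₀ by uniqueness
  have h1 := floquet_recover H₀ hH₀sa hspec₀
  rw [hexp₀] at h1
  have h2 := floquet_recover (F V₀) (hF V₀ hV₀).1 (hF V₀ hV₀).2.1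
  rw [(hF V₀ hV₀).2.2] at h2
  have hFV₀ : F V₀ = H₀ := h2.symm.trans h1
  exact ⟨fun k => φ k + N, by rw [hFV₀]; exact hlim⟩

end FloquetAux

/-- the Floquet-Hamiltonian map is continuous on the set of unitaries for
which `-1` is not an eigenvalue: any map `F` assigning to each such unitary `V` the (unique)
Hermitian matrix with eigenvalues in `(-π,π)` and `exp (-i F V) = V` is continuous there. -/
theorem floquet_hamiltonian_continuous {n : ℕ} (hn : 1 ≤ n)
    (F : Matrix (Fin n) (Fin n) ℂ → Matrix (Fin n) (Fin n) ℂ)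
    (hF : ∀ V ∈ {V : Matrix (Fin n) (Fin n) ℂ |
        V ∈ Matrix.unitaryGroup (Fin n) ℂ ∧ (-1 : ℂ) ∉ spectrum ℂ V},
      (F V).IsHermitian ∧
      (∀ z ∈ spectrum ℂ (F V), ∃ r : ℝ, z = (r : ℂ) ∧ r ∈ Set.Ioo (-Real.pi) Real.pi) ∧
      NormedSpace.exp ((-Complex.I) • F V) = V) :
    ContinuousOn F {V : Matrix (Fin n) (Fin n) ℂ |
      V ∈ Matrix.unitaryGroup (Fin n) ℂ ∧ (-1 : ℂ) ∉ spectrum ℂ V} := by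
  exact floquet_main_aux hn F hF
end

section
/- Let X be a topological space and let H₁, H₂ : X → Matrix n n ℂ be continuous maps such that each H_i(x) is Hermitian with all eigenvalues in (-π,π)\{0}, and let C_i(x,t) = exp(-i t H_i(x)) be the corresponding gapped constant evolutions. Then C₁ and C₂ are homotopic through gapped constant evolutions if and only if H₁ and H₂ are homotopic through continuous families of Hermitian matrices with all eigenvalues in (-π,π)\{0}, i.e. iff there is a continuous map G : [0,1] × X → Matrix n n ℂ with each G(s,x) Hermitian with all eigenvalues in (-π,π)\{0}, G(0,·) = H₁ and G(1,·) = H₂. -/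
open Matrix Set

section AuxLemmas

open NormedSpace

/-- Uniqueness of the generator: if two matrices generate the same constant evolution on
`[0,1]`, they are equal. -/
lemma constGen_unique {n : ℕ} {A B : Matrix (Fin n) (Fin n) ℂ}
    (h : ∀ t : unitInterval,
      exp ((-(((t : ℝ) : ℂ) * Complex.I)) • A) = exp ((-(((t : ℝ) : ℂ) * Complex.I)) • B)) :
    A = B := by
  letI := Matrix.linftyOpNormedAddCommGroup (α := ℂ) (m := Fin n) (n := Fin n)
  letI := Matrix.linftyOpNormedRing (α := ℂ) (n := Fin n)
  letI := Matrix.linftyOpNormedAlgebra (α := ℂ) (n := Fin n) (R := ℂ)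
  have key : ∀ M : Matrix (Fin n) (Fin n) ℂ,
      HasDerivWithinAt (fun u : ℝ => exp (u • M)) M (Icc (0:ℝ) 1) 0 := by
    intro M
    have hd : HasDerivAt (fun u : ℝ => exp (u • M)) (exp ((0:ℝ) • M) * M) 0 := by
      exact hasDerivAt_exp_smul_const M 0
    have hd' := hd.hasDerivWithinAt (s := Icc (0:ℝ) 1)
    simp only [zero_smul, exp_zero, one_mul] at hd'
    exact hd'
  have hsm : ∀ (t : ℝ) (M : Matrix (Fin n) (Fin n) ℂ),
      t • ((-Complex.I) • M) = (-(((t : ℝ) : ℂ) * Complex.I)) • M := by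
    intro t M
    rw [← smul_assoc]
    congr 1
    rw [Complex.real_smul]
    ring
  have h' : ∀ t ∈ Icc (0:ℝ) 1,
      exp (t • ((-Complex.I) • A)) = exp (t • ((-Complex.I) • B)) := by
    intro t ht
    rw [hsm t A, hsm t B]
    exact h ⟨t, ht⟩
  have hA := key ((-Complex.I) • A)
  have hB : HasDerivWithinAt (fun u : ℝ => exp (u • ((-Complex.I) • A)))
      ((-Complex.I) • B) (Icc (0:ℝ) 1) 0 :=
    (key ((-Complex.I) • B)).congr (fun y hy => h' y hy) (h' 0 ⟨le_refl 0, zero_le_one⟩)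
  have hIAB : (-Complex.I) • A = (-Complex.I) • B :=
    (uniqueDiffOn_Icc zero_lt_one 0 (left_mem_Icc.2 zero_le_one)).eq_deriv _ hA hB
  have hI : (-Complex.I) ≠ 0 := by simpa using Complex.I_ne_zero
  exact smul_right_injective _ hI hIAB

/-- Continuity of the exponential evolution map. -/
lemma continuous_expAux {n : ℕ} :
    Continuous (fun q : Matrix (Fin n) (Fin n) ℂ × unitInterval =>
      exp ((-(((q.2 : ℝ) : ℂ) * Complex.I)) • q.1)) := by
  letI := Matrix.linftyOpNormedAddCommGroup (α := ℂ) (m := Fin n) (n := Fin n)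
  letI := Matrix.linftyOpNormedRing (α := ℂ) (n := Fin n)
  letI := Matrix.linftyOpNormedAlgebra (α := ℂ) (n := Fin n) (R := ℂ)
  letI := Matrix.linftyOpNormedAlgebra (α := ℂ) (n := Fin n) (R := ℚ)
  have hc : Continuous (fun q : Matrix (Fin n) (Fin n) ℂ × unitInterval =>
      (-(((q.2 : ℝ) : ℂ) * Complex.I)) • q.1) := by
    refine Continuous.smul (f := fun q : Matrix (Fin n) (Fin n) ℂ × unitInterval =>
      -(((q.2 : ℝ) : ℂ) * Complex.I)) ?_ continuous_fst
    exact ((Complex.continuous_ofReal.comp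
      (continuous_subtype_val.comp continuous_snd)).mul continuous_const).neg
  exact exp_continuous.comp hc

/-- Entries of a Hermitian matrix with eigenvalues in `(-π,π)` are bounded by `n * π`. -/
lemma entry_bound {n : ℕ} {A : Matrix (Fin n) (Fin n) ℂ} (hA : A.IsHermitian)
    (hs : ∀ z ∈ spectrum ℂ A, ∃ r : ℝ,
      z = (r : ℂ) ∧ r ∈ Set.Ioo (-Real.pi) Real.pi ∧ r ≠ 0) (i j : Fin n) :
    ‖A i j‖ ≤ n * Real.pi := by
  have hval : ∀ k : Fin n, |hA.eigenvalues k| ≤ Real.pi := by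
    intro k
    have h1 : ((hA.eigenvalues k : ℝ) : ℂ) ∈ spectrum ℂ A :=
      spectrum.algebraMap_mem ℂ (hA.eigenvalues_mem_spectrum_real k)
    obtain ⟨r, hr1, hr2, -⟩ := hs _ h1
    have : hA.eigenvalues k = r := by exact_mod_cast hr1
    rw [this]
    exact le_of_lt (abs_lt.2 ⟨hr2.1, hr2.2⟩)
  have hU : (hA.eigenvectorUnitary : Matrix (Fin n) (Fin n) ℂ) ∈ Matrix.unitaryGroup (Fin n) ℂ :=
    hA.eigenvectorUnitary.2
  conv_lhs => rw [hA.spectral_theorem, Unitary.conjStarAlgAut_apply]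
  rw [Matrix.mul_apply]
  refine le_trans (norm_sum_le _ _) ?_
  have hterm : ∀ k : Fin n,
      ‖(((hA.eigenvectorUnitary : Matrix (Fin n) (Fin n) ℂ) * Matrix.diagonal
        (RCLike.ofReal ∘ hA.eigenvalues) : Matrix (Fin n) (Fin n) ℂ)) i k *
        (star (hA.eigenvectorUnitary : Matrix (Fin n) (Fin n) ℂ)) k j‖ ≤ Real.pi := by
    intro k
    rw [Matrix.mul_diagonal, Matrix.star_apply]
    simp only [norm_mul, norm_star]
    have h1 : ‖(hA.eigenvectorUnitary : Matrix (Fin n) (Fin n) ℂ) i k‖ ≤ 1 :=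
      entry_norm_bound_of_unitary hU i k
    have h2 : ‖(hA.eigenvectorUnitary : Matrix (Fin n) (Fin n) ℂ) j k‖ ≤ 1 :=
      entry_norm_bound_of_unitary hU j k
    have h3 : ‖((RCLike.ofReal ∘ hA.eigenvalues : Fin n → ℂ)) k‖ ≤ Real.pi := by
      simpa [Function.comp] using hval k
    calc ‖(hA.eigenvectorUnitary : Matrix (Fin n) (Fin n) ℂ) i k‖ *
          ‖((RCLike.ofReal ∘ hA.eigenvalues : Fin n → ℂ)) k‖ *
          ‖(hA.eigenvectorUnitary : Matrix (Fin n) (Fin n) ℂ) j k‖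
        ≤ 1 * Real.pi * 1 := by
          gcongr <;> first
            | exact norm_nonneg _ | exact h1 | exact h2 | exact h3
      _ = Real.pi := by ring
  refine le_trans (Finset.sum_le_sum fun k _ => hterm k) ?_
  simp [Finset.sum_const, Finset.card_univ]

/-- The set of matrices with all entries bounded by `c` is compact. -/
lemma isCompact_entryBall (n : ℕ) (c : ℝ) :
    IsCompact {A : Matrix (Fin n) (Fin n) ℂ | ∀ i j, ‖A i j‖ ≤ c} := by
  have heq : {A : Matrix (Fin n) (Fin n) ℂ | ∀ i j, ‖A i j‖ ≤ c} =
      Set.pi Set.univ (fun _ : Fin n =>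
        Set.pi Set.univ (fun _ : Fin n => Metric.closedBall (0 : ℂ) c)) := by
    ext A
    constructor
    · intro hA
      exact Set.mem_univ_pi.2 fun i => Set.mem_univ_pi.2 fun j =>
        mem_closedBall_zero_iff.2 (hA i j)
    · intro hA i j
      exact mem_closedBall_zero_iff.1 (Set.mem_univ_pi.1 (Set.mem_univ_pi.1 hA i) j)
  rw [heq]
  exact isCompact_univ_pi fun _ =>
    isCompact_univ_pi fun _ => isCompact_closedBall _ _

end AuxLemmas

set_option maxHeartbeats 1000000 in
/-- two gapped constant evolutions are homotopic through gapped constant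
evolutions iff their generating Hermitian families are homotopic through continuous families
of Hermitian matrices with all eigenvalues in `(-π,π) \ {0}`. -/
theorem const_evolutions_homotopic_iff_hamiltonians_homotopic
    {X : Type*} [TopologicalSpace X] {n : ℕ} (hn : 1 ≤ n)
    (H₁ H₂ : X → Matrix (Fin n) (Fin n) ℂ)
    (hH₁ : IsGappedHermitianFamily H₁) (hH₂ : IsGappedHermitianFamily H₂) :
    HomotopicThrough IsGappedConstantEvolution (constEvol H₁) (constEvol H₂) ↔
      ∃ G : unitInterval × X → Matrix (Fin n) (Fin n) ℂ,
        Continuous G ∧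
        (∀ p, (G p).IsHermitian ∧
          ∀ z ∈ spectrum ℂ (G p), ∃ r : ℝ,
            z = (r : ℂ) ∧ r ∈ Set.Ioo (-Real.pi) Real.pi ∧ r ≠ 0) ∧
        (∀ x, G (0, x) = H₁ x) ∧ (∀ x, G (1, x) = H₂ x) := by
  constructor
  · rintro ⟨h, hcont, hQ, h0, h1⟩
    choose Hfam hfam heq using hQ
    -- pointwise description of h
    have hpt : ∀ (s : unitInterval) (x : X) (t : unitInterval),
        h (s, (x, t)) = NormedSpace.exp ((-(((t : ℝ) : ℂ) * Complex.I)) • Hfam s x) := by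
      intro s x t
      exact congrFun (heq s) (x, t)
    refine ⟨fun p => Hfam p.1 p.2, ?_, fun p => (hfam p.1).2 p.2, ?_, ?_⟩
    · -- continuity
      set Kset := {A : Matrix (Fin n) (Fin n) ℂ | ∀ i j, ‖A i j‖ ≤ n * Real.pi} with hKset
      haveI : CompactSpace Kset :=
        isCompact_iff_compactSpace.mp (isCompact_entryBall n (n * Real.pi))
      have hmem : ∀ p : unitInterval × X, Hfam p.1 p.2 ∈ Kset := by
        intro p i j
        exact entry_bound ((hfam p.1).2 p.2).1 ((hfam p.1).2 p.2).2 i j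
      let E : C(Matrix (Fin n) (Fin n) ℂ × unitInterval, Matrix (Fin n) (Fin n) ℂ) :=
        ⟨fun q => NormedSpace.exp ((-(((q.2 : ℝ) : ℂ) * Complex.I)) • q.1), continuous_expAux⟩
      let Φ : Kset → C(unitInterval, Matrix (Fin n) (Fin n) ℂ) := fun A => E.curry A.1
      have hΦc : Continuous Φ := E.curry.continuous.comp continuous_subtype_val
      have hΦinj : Function.Injective Φ := by
        intro A B hAB
        apply Subtype.ext
        apply constGen_unique (n := n)
        intro t
        simpa [Φ, E] using DFunLike.congr_fun hAB t
      have hemb : Topology.IsEmbedding Φ := (hΦc.isClosedEmbedding hΦinj).toIsEmbedding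
      let g : unitInterval × X → Kset := fun p => ⟨Hfam p.1 p.2, hmem p⟩
      have hg : Continuous g := by
        rw [hemb.continuous_iff]
        have hF : Continuous (fun q : (unitInterval × X) × unitInterval =>
            h (q.1.1, (q.1.2, q.2))) := by
          apply hcont.comp
          exact (continuous_fst.comp continuous_fst).prodMk
            ((continuous_snd.comp continuous_fst).prodMk continuous_snd)
        have hfc : Φ ∘ g = ⇑(ContinuousMap.curry ⟨_, hF⟩) := by
          funext p
          refine ContinuousMap.ext fun t => ?_
          show NormedSpace.exp ((-(((t : ℝ) : ℂ) * Complex.I)) • Hfam p.1 p.2)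
              = h (p.1, (p.2, t))
          exact (hpt p.1 p.2 t).symm
        rw [hfc]
        exact (ContinuousMap.curry _).continuous
      exact continuous_subtype_val.comp hg
    · -- boundary at 0
      intro x
      apply constGen_unique (n := n)
      intro t
      rw [← hpt 0 x t]
      exact h0 (x, t)
    · -- boundary at 1
      intro x
      apply constGen_unique (n := n)
      intro t
      rw [← hpt 1 x t]
      exact h1 (x, t)
  · rintro ⟨G, hGc, hGspec, hG0, hG1⟩
    refine ⟨fun q => constEvol (fun x => G (q.1, x)) q.2, ?_, ?_, ?_, ?_⟩
    · show Continuous ((fun q : Matrix (Fin n) (Fin n) ℂ × unitInterval =>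
        NormedSpace.exp ((-(((q.2 : ℝ) : ℂ) * Complex.I)) • q.1)) ∘
        (fun q : unitInterval × (X × unitInterval) => (G (q.1, q.2.1), q.2.2)))
      exact continuous_expAux.comp ((hGc.comp (continuous_fst.prodMk
        (continuous_fst.comp continuous_snd))).prodMk (continuous_snd.comp continuous_snd))
    · intro s
      exact ⟨fun x => G (s, x), ⟨hGc.comp (Continuous.prodMk_right s), fun x => hGspec (s, x)⟩, rfl⟩
    · intro y
      show constEvol (fun x => G (0, x)) y = constEvol H₁ y
      rw [show (fun x => G (0, x)) = H₁ from funext hG0]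
    · intro y
      show constEvol (fun x => G (1, x)) y = constEvol H₂ y
      rw [show (fun x => G (1, x)) = H₂ from funext hG1]
end

section
/- Particle-hole symmetry of the Hamiltonian implies particle-hole symmetry of the evolution operator: let d, n ≥ 1, let H : (Fin d → ℝ) → ℝ → Matrix n n ℂ be continuous with each H(k,t) Hermitian, and let P be an n×n unitary matrix such that P·H(k,t)·P⁻¹ = -(H(-k,t))* for all k and t, where M* denotes the entrywise complex conjugate. Suppose U : (Fin d → ℝ) → ℝ → Matrix n n ℂ satisfies U(k,0) = 1 and, for every k and t, the derivative in t of U(k,·) at t equals -i·H(k,t)·U(k,t). Then P·U(k,t)·P⁻¹ = (U(-k,t))* for all k and t. -/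
open Matrix

attribute [local instance] Matrix.normedAddCommGroup Matrix.normedSpace

private lemma mat_mul_norm_le {n : ℕ} (A B : Matrix (Fin n) (Fin n) ℂ) :
    ‖A * B‖ ≤ n * ‖A‖ * ‖B‖ := by
  rw [Matrix.norm_le_iff (by positivity)]
  intro i j
  calc ‖(A * B) i j‖ = ‖∑ l, A i l * B l j‖ := by rw [Matrix.mul_apply]
    _ ≤ ∑ l, ‖A i l * B l j‖ := norm_sum_le _ _
    _ ≤ ∑ _l : Fin n, ‖A‖ * ‖B‖ := by
        refine Finset.sum_le_sum fun l _ => ?_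
        rw [norm_mul]
        exact mul_le_mul (Matrix.norm_entry_le_entrywise_sup_norm A)
          (Matrix.norm_entry_le_entrywise_sup_norm B) (norm_nonneg _) (norm_nonneg _)
    _ = n * ‖A‖ * ‖B‖ := by
        simp [Finset.sum_const, Finset.card_univ, mul_assoc]

/-- Entrywise conjugation as an `ℝ`-linear map on matrices. -/
private noncomputable def conjLM (n : ℕ) :
    Matrix (Fin n) (Fin n) ℂ →ₗ[ℝ] Matrix (Fin n) (Fin n) ℂ where
  toFun M := M.map (starRingEnd ℂ)
  map_add' M N := by
    ext i j
    simp [Matrix.map_apply]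
  map_smul' r M := by
    ext i j
    simp [Matrix.map_apply, Complex.real_smul, _root_.map_mul, Complex.conj_ofReal]

/-- Conjugation `M ↦ P * M * P⁻¹` as an `ℝ`-linear map on matrices. -/
private noncomputable def conjByLM {n : ℕ} (P : Matrix (Fin n) (Fin n) ℂ) :
    Matrix (Fin n) (Fin n) ℂ →ₗ[ℝ] Matrix (Fin n) (Fin n) ℂ where
  toFun M := P * M * P⁻¹
  map_add' M N := by noncomm_ring
  map_smul' r M := by
    simp [mul_smul_comm, smul_mul_assoc]

/-- particle-hole symmetry of the Hamiltonian implies particle-hole symmetry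
of the time-evolution operator: `P U(k,t) P⁻¹ = (U(-k,t))*`. -/
theorem evolution_particle_hole_symmetry {d n : ℕ} (hd : 1 ≤ d) (hn : 1 ≤ n)
    (H : (Fin d → ℝ) → ℝ → Matrix (Fin n) (Fin n) ℂ)
    (hHcont : Continuous fun p : (Fin d → ℝ) × ℝ => H p.1 p.2)
    (hHherm : ∀ k t, (H k t).IsHermitian)
    (P : Matrix (Fin n) (Fin n) ℂ) (hP : P ∈ Matrix.unitaryGroup (Fin n) ℂ)
    (hPH : ∀ k t, P * H k t * P⁻¹ = -((H (-k) t).map (starRingEnd ℂ)))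
    (U : (Fin d → ℝ) → ℝ → Matrix (Fin n) (Fin n) ℂ)
    (hU0 : ∀ k, U k 0 = 1)
    (hUde : ∀ k t, HasDerivAt (U k) ((-Complex.I) • (H k t * U k t)) t) :
    ∀ k t, P * U k t * P⁻¹ = (U (-k) t).map (starRingEnd ℂ) := by
  -- P is invertible
  have hPinv1 : P⁻¹ * P = 1 := by
    rw [Matrix.inv_eq_left_inv hP.1]; exact hP.1
  have hPinv2 : P * P⁻¹ = 1 := by
    rw [Matrix.inv_eq_left_inv hP.1]; exact hP.2
  intro k t₀
  -- the target matrices as functions of time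
  set f : ℝ → Matrix (Fin n) (Fin n) ℂ := fun t => P * U k t * P⁻¹ with hf_def
  set g : ℝ → Matrix (Fin n) (Fin n) ℂ := fun t => (U (-k) t).map (starRingEnd ℂ) with hg_def
  set A : ℝ → Matrix (Fin n) (Fin n) ℂ := fun t => (H (-k) t).map (starRingEnd ℂ) with hA_def
  -- continuity of time-slices
  have hUc : ∀ k', Continuous (U k') := fun k' =>
    continuous_iff_continuousAt.2 fun t => (hUde k' t).continuousAt
  have hAc : Continuous A := by
    have : Continuous fun t : ℝ => H (-k) t :=
      hHcont.comp (continuous_const.prodMk continuous_id)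
    exact this.matrix_map (Complex.continuous_conj)
  -- both f and g satisfy X' = I • (A t * X)
  have hf' : ∀ t, HasDerivAt f (Complex.I • (A t * f t)) t := by
    intro t
    have hL := ((conjByLM P).toContinuousLinearMap.hasFDerivAt
      (x := U k t)).comp_hasDerivAt t (hUde k t)
    have : HasDerivAt f (P * ((-Complex.I) • (H k t * U k t)) * P⁻¹) t := hL
    convert this using 1
    have key : P * (H k t * U k t) * P⁻¹ = (P * H k t * P⁻¹) * (P * U k t * P⁻¹) := by
      calc P * (H k t * U k t) * P⁻¹
          = P * H k t * (P⁻¹ * P) * (U k t * P⁻¹) := by rw [hPinv1]; noncomm_ring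
        _ = (P * H k t * P⁻¹) * (P * U k t * P⁻¹) := by noncomm_ring
    rw [mul_smul_comm, smul_mul_assoc, key, hPH k t]
    simp only [hf_def, hA_def, neg_mul, smul_neg, neg_smul, neg_neg]
  have hg' : ∀ t, HasDerivAt g (Complex.I • (A t * g t)) t := by
    intro t
    have hL := ((conjLM n).toContinuousLinearMap.hasFDerivAt
      (x := U (-k) t)).comp_hasDerivAt t (hUde (-k) t)
    have : HasDerivAt g (((-Complex.I) • (H (-k) t * U (-k) t)).map (starRingEnd ℂ)) t := hL
    convert this using 1
    ext i j
    simp only [hA_def, hg_def, Matrix.map_apply, Matrix.smul_apply, Matrix.mul_apply,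
      smul_eq_mul, map_sum, Finset.mul_sum, map_neg, _root_.map_mul, Complex.conj_I,
      neg_mul, neg_neg, mul_assoc]
  -- compact interval around 0 and t₀
  set a : ℝ := -(|t₀| + 1) with ha_def
  set b : ℝ := |t₀| + 1 with hb_def
  have hab : a < b := by
    have := abs_nonneg t₀; simp only [ha_def, hb_def]; linarith
  have h0ab : (0:ℝ) ∈ Set.Ioo a b := by
    constructor <;> · simp only [ha_def, hb_def]; have := abs_nonneg t₀; linarith
  have ht₀ab : t₀ ∈ Set.Icc a b := by
    constructor
    · have := neg_abs_le t₀; simp only [ha_def]; linarith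
    · have := le_abs_self t₀; simp only [hb_def]; linarith
  -- uniform Lipschitz bound on the interval
  obtain ⟨C, hC⟩ := (isCompact_Icc (a := a) (b := b)).exists_bound_of_continuousOn
    hAc.continuousOn
  set C0 : ℝ := max (n * C) 0 with hC0_def
  set K : NNReal := Real.toNNReal C0 with hK_def
  have hKC0 : (K : ℝ) = C0 := Real.coe_toNNReal _ (le_max_right _ _)
  -- the (time-clamped) vector field
  set v : ℝ → Matrix (Fin n) (Fin n) ℂ → Matrix (Fin n) (Fin n) ℂ :=
    fun t M => Complex.I • (A (min (max t a) b) * M) with hv_def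
  have hclamp : ∀ t, min (max t a) b ∈ Set.Icc a b := fun t =>
    ⟨le_min (le_max_right _ _) hab.le, min_le_right _ _⟩
  have hclamp_eq : ∀ t ∈ Set.Ioo a b, min (max t a) b = t := by
    intro t ht
    rw [max_eq_left ht.1.le, min_eq_left ht.2.le]
  have hv : ∀ t, LipschitzOnWith K (v t) Set.univ := by
    intro t
    refine (LipschitzWith.of_dist_le_mul fun M N => ?_).lipschitzOnWith
    rw [dist_eq_norm, dist_eq_norm, hKC0]
    have : v t M - v t N = Complex.I • (A (min (max t a) b) * (M - N)) := by
      simp only [hv_def, ← smul_sub, ← mul_sub]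
    rw [this, norm_smul, Complex.norm_I, one_mul]
    calc ‖A (min (max t a) b) * (M - N)‖
        ≤ n * ‖A (min (max t a) b)‖ * ‖M - N‖ := mat_mul_norm_le _ _
      _ ≤ C0 * ‖M - N‖ := by
          apply mul_le_mul_of_nonneg_right _ (norm_nonneg _)
          refine le_trans ?_ (le_max_left _ _)
          exact mul_le_mul_of_nonneg_left (hC _ (hclamp t)) (by positivity)
  -- apply ODE uniqueness
  have heq : f 0 = g 0 := by
    simp only [hf_def, hg_def, hU0, mul_one, hPinv2]
    ext i j
    simp [Matrix.map_apply, Matrix.one_apply, apply_ite]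
  have hfin := ODE_solution_unique_of_mem_Icc (v := v) (s := fun _ => Set.univ) (fun t _ => hv t) h0ab
    (continuous_iff_continuousAt.2 fun t => (hf' t).continuousAt).continuousOn
    (fun t ht => by rw [hv_def]; simp only [hclamp_eq t ht]; exact hf' t)
    (fun _ _ => Set.mem_univ _)
    (continuous_iff_continuousAt.2 fun t => (hg' t).continuousAt).continuousOn
    (fun t ht => by rw [hv_def]; simp only [hclamp_eq t ht]; exact hg' t)
    (fun _ _ => Set.mem_univ _) heq
  exact hfin ht₀ab
end

section
/- Time-reversal symmetry of the Hamiltonian implies the stated transformation of the evolution operator: let d, n ≥ 1, let H : (Fin d → ℝ) → ℝ → Matrix n n ℂ be continuous with each H(k,t) Hermitian, and let θ be an n×n unitary matrix such that θ·H(k,t)·θ⁻¹ = (H(-k,1-t))* for all k and t, where M* denotes the entrywise complex conjugate. Suppose U : (Fin d → ℝ) → ℝ → Matrix n n ℂ satisfies U(k,0) = 1 and, for every k and t, the derivative in t of U(k,·) at t equals -i·H(k,t)·U(k,t). Then every U(k,t) is unitary and θ·U(k,t)·θ⁻¹ = (U(-k,1-t))* · (U(-k,1))ᵀ for all k and t,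 where Mᵀ denotes the transpose. -/
open Matrix

attribute [local instance] Matrix.normedAddCommGroup Matrix.normedSpace
noncomputable def mulCLM (n : ℕ) : Matrix (Fin n) (Fin n) ℂ →L[ℝ] Matrix (Fin n) (Fin n) ℂ →L[ℝ] Matrix (Fin n) (Fin n) ℂ :=
  LinearMap.toContinuousLinearMap
    { toFun := fun A => LinearMap.toContinuousLinearMap
        { toFun := fun B => A * B
          map_add' := fun B C => Matrix.mul_add A B C
          map_smul' := fun r B => (Matrix.mul_smul A r B) }
      map_add' := by intro A B; ext C : 1; exact Matrix.add_mul A B C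
      map_smul' := by intro r A; ext C : 1; exact Matrix.smul_mul r A C }

@[simp] lemma mulCLM_apply {n : ℕ} (A B : Matrix (Fin n) (Fin n) ℂ) : mulCLM n A B = A * B := rfl

theorem HasDerivAt.matMul {n : ℕ} {f g : ℝ → Matrix (Fin n) (Fin n) ℂ}
    {f' g' : Matrix (Fin n) (Fin n) ℂ} {t : ℝ}
    (hf : HasDerivAt f f' t) (hg : HasDerivAt g g' t) :
    HasDerivAt (fun s => f s * g s) (f' * g t + f t * g') t := by
  letI := Matrix.linftyOpNormedRing (n := Fin n) (α := ℂ)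
  letI := Matrix.linftyOpNormedAlgebra (n := Fin n) (α := ℂ) (R := ℝ)
  have := hf.mul hg
  exact this

noncomputable def conjCLM (n : ℕ) : Matrix (Fin n) (Fin n) ℂ →L[ℝ] Matrix (Fin n) (Fin n) ℂ :=
  LinearMap.toContinuousLinearMap
    { toFun := fun A => A.map (starRingEnd ℂ)
      map_add' := by intro A B; ext i j; simp
      map_smul' := by intro r A; ext i j; simp [Matrix.map_apply] }

noncomputable def transCLM (n : ℕ) : Matrix (Fin n) (Fin n) ℂ →L[ℝ] Matrix (Fin n) (Fin n) ℂ :=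
  LinearMap.toContinuousLinearMap
    { toFun := fun A => Aᵀ
      map_add' := by intro A B; ext i j; simp
      map_smul' := by intro r A; ext i j; simp }

theorem HasDerivAt.matConj {n : ℕ} {f : ℝ → Matrix (Fin n) (Fin n) ℂ}
    {f' : Matrix (Fin n) (Fin n) ℂ} {t : ℝ} (hf : HasDerivAt f f' t) :
    HasDerivAt (fun s => (f s).map (starRingEnd ℂ)) (f'.map (starRingEnd ℂ)) t := by
  have := (conjCLM n).hasFDerivAt.comp_hasDerivAt t hf
  exact this

theorem HasDerivAt.matConjT {n : ℕ} {f : ℝ → Matrix (Fin n) (Fin n) ℂ}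
    {f' : Matrix (Fin n) (Fin n) ℂ} {t : ℝ} (hf : HasDerivAt f f' t) :
    HasDerivAt (fun s => (f s)ᴴ) f'ᴴ t := by
  have h := (transCLM n).hasFDerivAt.comp_hasDerivAt t hf.matConj
  exact h

theorem const_of_hasDerivAt_zero {n : ℕ} {f : ℝ → Matrix (Fin n) (Fin n) ℂ}
    (hf : ∀ t, HasDerivAt f 0 t) (t : ℝ) : f t = f 0 :=
  is_const_of_deriv_eq_zero (fun x => (hf x).differentiableAt) (fun x => (hf x).deriv) t 0

lemma map_conj_smul {n : ℕ} (c : ℂ) (M : Matrix (Fin n) (Fin n) ℂ) :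
    (c • M).map (starRingEnd ℂ) = (starRingEnd ℂ) c • M.map (starRingEnd ℂ) := by
  ext i j; simp [Matrix.map_apply]

lemma conjT_map_conj {n : ℕ} (M : Matrix (Fin n) (Fin n) ℂ) :
    Mᴴ.map (starRingEnd ℂ) = Mᵀ := by
  ext i j; simp [Matrix.map_apply]


/-- time-reversal symmetry of the Hamiltonian implies that the time-evolution
operator is unitary and satisfies `θ U(k,t) θ⁻¹ = (U(-k,1-t))* (U(-k,1))ᵀ`. -/
theorem evolution_time_reversal_symmetry {d n : ℕ} (hd : 1 ≤ d) (hn : 1 ≤ n)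
    (H : (Fin d → ℝ) → ℝ → Matrix (Fin n) (Fin n) ℂ)
    (hHcont : Continuous fun p : (Fin d → ℝ) × ℝ => H p.1 p.2)
    (hHherm : ∀ k t, (H k t).IsHermitian)
    (θ : Matrix (Fin n) (Fin n) ℂ) (hθ : θ ∈ Matrix.unitaryGroup (Fin n) ℂ)
    (hθH : ∀ k t, θ * H k t * θ⁻¹ = (H (-k) (1 - t)).map (starRingEnd ℂ))
    (U : (Fin d → ℝ) → ℝ → Matrix (Fin n) (Fin n) ℂ)
    (hU0 : ∀ k, U k 0 = 1)
    (hUde : ∀ k t, HasDerivAt (U k) ((-Complex.I) • (H k t * U k t)) t) :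
    (∀ k t, U k t ∈ Matrix.unitaryGroup (Fin n) ℂ) ∧
    ∀ k t, θ * U k t * θ⁻¹ = (U (-k) (1 - t)).map (starRingEnd ℂ) * (U (-k) 1)ᵀ := by
  -- key algebraic cancellation
  have key : ∀ k t (A : Matrix (Fin n) (Fin n) ℂ),
      ((-Complex.I) • (H k t * U k t))ᴴ * A
        + (U k t)ᴴ * ((-Complex.I) • (H k t * A)) = 0 := by
    intro k t A
    rw [Matrix.conjTranspose_smul, Matrix.conjTranspose_mul, (hHherm k t).eq]
    have h1 : star (-Complex.I) = Complex.I := by simp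
    rw [h1, smul_mul_assoc, Matrix.mul_smul, mul_assoc, ← add_smul]
    simp
  -- unitarity (left inverse)
  have unitL : ∀ k t, (U k t)ᴴ * U k t = 1 := by
    intro k t
    have hder : ∀ s, HasDerivAt (fun r => (U k r)ᴴ * U k r) 0 s := by
      intro s
      have h := ((hUde k s).matConjT).matMul (hUde k s)
      rwa [key k s (U k s)] at h
    have := const_of_hasDerivAt_zero hder t
    simpa [hU0 k] using this
  have unitR : ∀ k t, U k t * (U k t)ᴴ = 1 := fun k t =>
    mul_eq_one_comm.mp (unitL k t)
  have mem : ∀ k t, U k t ∈ Matrix.unitaryGroup (Fin n) ℂ := by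
    intro k t
    rw [Matrix.mem_unitaryGroup_iff]
    simpa [Matrix.star_eq_conjTranspose] using unitR k t
  refine ⟨mem, ?_⟩
  -- unitary θ facts
  obtain ⟨hθ1, hθ2⟩ := Unitary.mem_iff.mp hθ
  have hinv : θ⁻¹ = star θ := Matrix.inv_eq_left_inv hθ1
  have hθli : θ⁻¹ * θ = 1 := by rw [hinv]; exact hθ1
  have hθri : θ * θ⁻¹ = 1 := by rw [hinv]; exact hθ2
  intro k t
  set B : ℝ → Matrix (Fin n) (Fin n) ℂ :=
    fun s => (U (-k) (1 - s)).map (starRingEnd ℂ) * (U (-k) 1)ᵀ with hBdef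
  set X : ℝ → Matrix (Fin n) (Fin n) ℂ := fun s => θ⁻¹ * B s * θ with hXdef
  -- derivative of B
  have hB : ∀ s, HasDerivAt B ((-Complex.I) • ((θ * H k s * θ⁻¹) * B s)) s := by
    intro s
    have hinner : HasDerivAt (fun r : ℝ => 1 - r) (-1) s := (hasDerivAt_id s).const_sub 1
    have hg : HasDerivAt (fun r => U (-k) (1 - r))
        ((-1 : ℝ) • ((-Complex.I) • (H (-k) (1 - s) * U (-k) (1 - s)))) s :=
      HasDerivAt.scomp s (hUde (-k) (1 - s)) hinner
    have hg2 : HasDerivAt (fun r => U (-k) (1 - r))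
        (Complex.I • (H (-k) (1 - s) * U (-k) (1 - s))) s := by
      convert hg using 1; simp
    have hc := hg2.matConj.matMul (hasDerivAt_const s ((U (-k) 1)ᵀ))
    convert hc using 1
    rw [map_conj_smul, Matrix.map_mul, hθH k s]
    simp [hBdef, Complex.conj_I, smul_mul_assoc, mul_assoc]
  -- derivative of X
  have hX : ∀ s, HasDerivAt X ((-Complex.I) • (H k s * X s)) s := by
    intro s
    have h := ((hasDerivAt_const s θ⁻¹).matMul (hB s)).matMul (hasDerivAt_const s θ)
    convert h using 1
    rw [hXdef]
    simp only [Matrix.zero_mul, Matrix.mul_zero, zero_add, add_zero]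
    rw [Matrix.mul_smul, Matrix.smul_mul]
    congr 1
    calc H k s * (θ⁻¹ * B s * θ)
        = (1 : Matrix (Fin n) (Fin n) ℂ) * H k s * (θ⁻¹ * B s * θ) := by rw [Matrix.one_mul]
      _ = θ⁻¹ * (θ * H k s * θ⁻¹ * B s) * θ := by rw [← hθli]; noncomm_ring
  -- the comparison function is constant
  have hC : ∀ s, HasDerivAt (fun r => (U k r)ᴴ * X r) 0 s := by
    intro s
    have h := ((hUde k s).matConjT).matMul (hX s)
    rwa [key k s (X s)] at h
  have hCconst := const_of_hasDerivAt_zero hC t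
  -- compute C 0 = 1
  have hB0 : B 0 = 1 := by
    have h1 : (1 : ℝ) - 0 = 1 := by norm_num
    rw [hBdef]
    simp only [h1]
    rw [← conjT_map_conj (U (-k) 1), ← Matrix.map_mul, unitR (-k) 1]
    simp
  have hC0 : (U k 0)ᴴ * X 0 = 1 := by
    rw [hU0 k, hXdef]
    simp [hB0, hθli]
  have hCt : (U k t)ᴴ * X t = 1 := by rw [hCconst, hC0]
  have hXt : X t = U k t := by
    have h := congrArg (fun M => U k t * M) hCt
    simpa [← mul_assoc, unitR k t] using h
  have : θ * X t * θ⁻¹ = B t := by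
    rw [hXdef]
    calc θ * (θ⁻¹ * B t * θ) * θ⁻¹
        = (θ * θ⁻¹) * B t * (θ * θ⁻¹) := by noncomm_ring
      _ = B t := by rw [hθri]; simp
  rw [← hXt, this]
end

section
/- Converse of the Hermitian-map construction (one-to-one correspondence): let d, n ≥ 1, let P be an n×n unitary matrix, and set P₁ = fromBlocks P 0 0 P and P₂ = fromBlocks P 0 0 (-P). Let M : (Fin d → ℝ) → Matrix (2n) (2n) ℂ be a family such that for every k: M(k) is Hermitian, M(k)² = 1, P₁·M(k)·P₁⁻¹ = (M(-k))*, and P₂·M(k)·P₂⁻¹ = -(M(-k))*. Then for each k there exists a unique n×n matrix U(k) such that M(k) = fromBlocks 0 (U(k)) ((U(k))ᴴ) 0; moreover each U(k) is unitary and P·U(k)·P⁻¹ = (U(-k))* for all k. -/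
open Matrix

/-- converse of the Hermitian-map construction. If a family `M k` of
Hermitian square-one matrices satisfies the two conjugation relations with
`P₁ = fromBlocks P 0 0 P` and `P₂ = fromBlocks P 0 0 (-P)`, then it comes from a (unique)
family of unitaries `U k` via `M k = fromBlocks 0 (U k) (U k)ᴴ 0`, and this family is
particle-hole symmetric: `P U(k) P⁻¹ = (U(-k))*`. -/
theorem hermitian_map_converse {d n : ℕ} (hd : 1 ≤ d) (hn : 1 ≤ n)
    (P : Matrix (Fin n) (Fin n) ℂ) (hP : P ∈ Matrix.unitaryGroup (Fin n) ℂ)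
    (M : (Fin d → ℝ) → Matrix (Fin n ⊕ Fin n) (Fin n ⊕ Fin n) ℂ)
    (hMherm : ∀ k, (M k).IsHermitian)
    (hMsq : ∀ k, M k * M k = 1)
    (hM1 : ∀ k, Matrix.fromBlocks P 0 0 P * M k * (Matrix.fromBlocks P 0 0 P)⁻¹ =
      (M (-k)).map (starRingEnd ℂ))
    (hM2 : ∀ k, Matrix.fromBlocks P 0 0 (-P) * M k * (Matrix.fromBlocks P 0 0 (-P))⁻¹ =
      -((M (-k)).map (starRingEnd ℂ))) :
    ∃ U : (Fin d → ℝ) → Matrix (Fin n) (Fin n) ℂ,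
      (∀ k, M k = Matrix.fromBlocks 0 (U k) (U k)ᴴ 0) ∧
      (∀ k, U k ∈ Matrix.unitaryGroup (Fin n) ℂ) ∧
      (∀ k, P * U k * P⁻¹ = (U (-k)).map (starRingEnd ℂ)) ∧
      ∀ V : (Fin d → ℝ) → Matrix (Fin n) (Fin n) ℂ,
        (∀ k, M k = Matrix.fromBlocks 0 (V k) (V k)ᴴ 0) → V = U := by
  -- basic facts about P
  have hPstar : P * Pᴴ = 1 := (Matrix.mem_unitaryGroup_iff).mp hP
  have hPdet : IsUnit P.det := Matrix.isUnit_det_of_right_inverse hPstar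
  have hPinv : P * P⁻¹ = 1 := Matrix.mul_nonsing_inv P hPdet
  have hPinv' : P⁻¹ * P = 1 := Matrix.nonsing_inv_mul P hPdet
  -- inverses of block matrices
  have hP1inv : (Matrix.fromBlocks P 0 0 P)⁻¹ = Matrix.fromBlocks P⁻¹ 0 0 P⁻¹ := by
    apply Matrix.inv_eq_right_inv
    simp [Matrix.fromBlocks_multiply, hPinv, Matrix.fromBlocks_one]
  have hP2inv : (Matrix.fromBlocks P 0 0 (-P))⁻¹ = Matrix.fromBlocks P⁻¹ 0 0 (-P⁻¹) := by
    apply Matrix.inv_eq_right_inv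
    simp [Matrix.fromBlocks_multiply, hPinv, Matrix.fromBlocks_one]
  -- rewrite relations without inverses
  have hM1' : ∀ k, Matrix.fromBlocks P 0 0 P * M k
      = (M (-k)).map (starRingEnd ℂ) * Matrix.fromBlocks P 0 0 P := by
    intro k
    have := hM1 k
    rw [hP1inv] at this
    calc Matrix.fromBlocks P 0 0 P * M k
        = Matrix.fromBlocks P 0 0 P * M k * Matrix.fromBlocks P⁻¹ 0 0 P⁻¹
          * Matrix.fromBlocks P 0 0 P := by
          rw [Matrix.mul_assoc, Matrix.fromBlocks_multiply]
          simp [hPinv', Matrix.fromBlocks_one]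
      _ = _ := by rw [this]
  have hM2' : ∀ k, Matrix.fromBlocks P 0 0 (-P) * M k
      = -((M (-k)).map (starRingEnd ℂ)) * Matrix.fromBlocks P 0 0 (-P) := by
    intro k
    have := hM2 k
    rw [hP2inv] at this
    calc Matrix.fromBlocks P 0 0 (-P) * M k
        = Matrix.fromBlocks P 0 0 (-P) * M k * Matrix.fromBlocks P⁻¹ 0 0 (-P⁻¹)
          * Matrix.fromBlocks P 0 0 (-P) := by
          rw [Matrix.mul_assoc, Matrix.fromBlocks_multiply]
          simp [hPinv', Matrix.fromBlocks_one]
      _ = _ := by rw [this]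
  -- block decomposition
  set A := fun k => (M k).toBlocks₁₁ with hA
  set B := fun k => (M k).toBlocks₁₂ with hB
  set C := fun k => (M k).toBlocks₂₁ with hC
  set D := fun k => (M k).toBlocks₂₂ with hD
  have hMblocks : ∀ k, M k = Matrix.fromBlocks (A k) (B k) (C k) (D k) := fun k =>
    (Matrix.fromBlocks_toBlocks (M k)).symm
  -- block equations
  have key : ∀ k,
      P * A k = (A (-k)).map (starRingEnd ℂ) * P ∧
      P * B k = (B (-k)).map (starRingEnd ℂ) * P ∧
      P * C k = (C (-k)).map (starRingEnd ℂ) * P ∧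
      P * D k = (D (-k)).map (starRingEnd ℂ) * P := by
    intro k
    have h := hM1' k
    rw [hMblocks k, hMblocks (-k), Matrix.fromBlocks_map, Matrix.fromBlocks_multiply,
      Matrix.fromBlocks_multiply] at h
    rw [Matrix.fromBlocks_inj] at h
    obtain ⟨h1, h2, h3, h4⟩ := h
    refine ⟨?_, ?_, ?_, ?_⟩
    · simpa using h1
    · simpa using h2
    · simpa using h3
    · simpa using h4
  have key2 : ∀ k,
      P * A k = -((A (-k)).map (starRingEnd ℂ) * P) ∧
      -(P * C k) = -((C (-k)).map (starRingEnd ℂ) * P) ∧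
      -(P * D k) = (D (-k)).map (starRingEnd ℂ) * P := by
    intro k
    have h := hM2' k
    rw [hMblocks k, hMblocks (-k), Matrix.fromBlocks_map, Matrix.fromBlocks_neg,
      Matrix.fromBlocks_multiply, Matrix.fromBlocks_multiply] at h
    rw [Matrix.fromBlocks_inj] at h
    obtain ⟨h1, h2, h3, h4⟩ := h
    refine ⟨by simpa using h1, by simpa using h3, by simpa [neg_mul] using h4⟩
  -- A = 0
  have hA0 : ∀ k, A k = 0 := by
    intro k
    have h1 := (key k).1
    have h2 := (key2 k).1
    have h3 : P * A k = -(P * A k) := h2.trans (by rw [h1])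
    have h4 : P * A k = 0 := by
      have : (2 : ℂ) • (P * A k) = 0 := by
        rw [two_smul]; nth_rewrite 2 [h3]; exact add_neg_cancel _
      simpa using this
    calc A k = (P⁻¹ * P) * A k := by rw [hPinv', Matrix.one_mul]
      _ = P⁻¹ * (P * A k) := by rw [Matrix.mul_assoc]
      _ = 0 := by rw [h4, Matrix.mul_zero]
  -- D = 0
  have hD0 : ∀ k, D k = 0 := by
    intro k
    have h1 := (key k).2.2.2
    have h2 := (key2 k).2.2
    have h3 : P * D k = -(P * D k) := by rw [← h1] at h2; exact h2.symm
    have h4 : P * D k = 0 := by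
      have : (2 : ℂ) • (P * D k) = 0 := by
        rw [two_smul]; nth_rewrite 2 [h3]; exact add_neg_cancel _
      simpa using this
    calc D k = (P⁻¹ * P) * D k := by rw [hPinv', Matrix.one_mul]
      _ = P⁻¹ * (P * D k) := by rw [Matrix.mul_assoc]
      _ = 0 := by rw [h4, Matrix.mul_zero]
  -- C = Bᴴ
  have hCB : ∀ k, C k = (B k)ᴴ := by
    intro k
    have h := (hMherm k).eq
    rw [hMblocks k, Matrix.fromBlocks_conjTranspose, Matrix.fromBlocks_inj] at h
    exact h.2.2.1.symm
  -- M k = fromBlocks 0 (B k) (B k)ᴴ 0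
  have hMform : ∀ k, M k = Matrix.fromBlocks 0 (B k) (B k)ᴴ 0 := by
    intro k
    rw [hMblocks k, hA0, hD0, hCB]
  refine ⟨B, hMform, ?_, ?_, ?_⟩
  · intro k
    have h := hMsq k
    rw [hMform k, Matrix.fromBlocks_multiply, ← Matrix.fromBlocks_one,
      Matrix.fromBlocks_inj] at h
    rw [Matrix.mem_unitaryGroup_iff]
    have h1 : B k * (B k)ᴴ = 1 := by simpa using h.1
    exact h1
  · intro k
    have h := (key k).2.1
    rw [h, Matrix.mul_assoc, hPinv, Matrix.mul_one]
  · intro V hV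
    funext k
    have := (hV k).symm.trans (hMform k)
    rw [Matrix.fromBlocks_inj] at this
    exact this.2.1
end
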